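/- arXiv:2111.15099 — 7 statements merged into one kernel-verified Lean document; each statement's English description precedes it below -/
import Mathlib

section
/- Let u be 1-Lipschitz on Ω ⊂ ℝ^d, let D be the set where ∇u exists, and for z ∈ D define ℓ±(z) = sup{t ≥ 0 : u(z ± t∇u(z)) − u(z) = ±t}. For j ∈ ℕ, on the set A_j = {z ∈ D : min(ℓ−(z), ℓ+(z)) > 1/j}, the map z ↦ ∇u(z) is Lipschitz with constant 4j. -/
open MeasureTheory

noncomputable section

abbrev Euc (d : ℕ) := EuclideanSpace ℝ (Fin d)

/-- `[x,y]` is a transport ray of `u` in `Ω`: `x ≠ y`, the Lipschitz inequality is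
saturated, and the segment is maximal with these properties. -/
def IsTransportRay {d : ℕ} (u : Euc d → ℝ) (Ω : Set (Euc d)) (x y : Euc d) : Prop :=
  x ≠ y ∧ segment ℝ x y ⊆ Ω ∧ u x - u y = ‖x - y‖ ∧
    ∀ z w : Euc d, z ≠ w → segment ℝ z w ⊆ Ω → u z - u w = ‖z - w‖ →
      segment ℝ x y ⊆ segment ℝ z w → segment ℝ z w = segment ℝ x y

/-- Ascending saturation length `ℓ₊(z)`. -/
def ellPlus {d : ℕ} (u : Euc d → ℝ) (Ω : Set (Euc d)) (z : Euc d) : ℝ :=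
  sSup {t : ℝ | 0 ≤ t ∧ z + t • gradient u z ∈ Ω ∧ u (z + t • gradient u z) - u z = t}

/-- Descending saturation length `ℓ₋(z)`. -/
def ellMinus {d : ℕ} (u : Euc d → ℝ) (Ω : Set (Euc d)) (z : Euc d) : ℝ :=
  sSup {t : ℝ | 0 ≤ t ∧ z - t • gradient u z ∈ Ω ∧ u (z - t • gradient u z) - u z = -t}

lemma key {d : ℕ} (Ω : Set (Euc d)) (hΩconv : Convex ℝ Ω) (u : Euc d → ℝ)
    (hu : LipschitzOnWith 1 u Ω) (σ : ℝ) (hσ : 0 < σ) (z : Euc d) (hz : z ∈ Ω)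
    (hdiff : DifferentiableAt ℝ u z)
    (hm : σ < ellMinus u Ω z) (hp : σ < ellPlus u Ω z) :
    ‖gradient u z‖ = 1 ∧
      (z + σ • gradient u z ∈ Ω ∧ u (z + σ • gradient u z) - u z = σ) ∧
      (z - σ • gradient u z ∈ Ω ∧ u (z - σ • gradient u z) - u z = -σ) := by
  set g := gradient u z with hg
  have hlip : ∀ a ∈ Ω, ∀ b ∈ Ω, u a - u b ≤ ‖a - b‖ := by
    intro a ha b hb
    have h := hu.dist_le_mul a ha b hb
    rw [Real.dist_eq, dist_eq_norm] at h
    simp only [NNReal.coe_one, one_mul] at h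
    linarith [(abs_le.1 h).2]
  obtain ⟨tp, ⟨htp0, htpΩ, htpe⟩, htpσ⟩ :=
    exists_lt_of_lt_csSup (s := {t : ℝ | 0 ≤ t ∧ z + t • g ∈ Ω ∧ u (z + t • g) - u z = t})
      ⟨0, by simp [hz]⟩ hp
  obtain ⟨tm, ⟨htm0, htmΩ, htme⟩, htmσ⟩ :=
    exists_lt_of_lt_csSup (s := {t : ℝ | 0 ≤ t ∧ z - t • g ∈ Ω ∧ u (z - t • g) - u z = -t})
      ⟨0, by simp [hz]⟩ hm
  have htp : (0:ℝ) < tp := hσ.trans htpσ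
  have htm : (0:ℝ) < tm := hσ.trans htmσ
  have memP : ∀ s : ℝ, 0 ≤ s → s ≤ tp → z + s • g ∈ Ω := by
    intro s hs0 hs1
    have : z + (s / tp) • (tp • g) ∈ Ω :=
      hΩconv.add_smul_mem hz (by simpa using htpΩ)
        ⟨div_nonneg hs0 htp.le, (div_le_one htp).2 hs1⟩
    rwa [smul_smul, div_mul_cancel₀ _ htp.ne'] at this
  have memM : ∀ s : ℝ, 0 ≤ s → s ≤ tm → z - s • g ∈ Ω := by
    intro s hs0 hs1
    have : z + (s / tm) • ((-tm) • g) ∈ Ω :=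
      hΩconv.add_smul_mem hz (by rw [neg_smul, ← sub_eq_add_neg]; exact htmΩ)
        ⟨div_nonneg hs0 htm.le, (div_le_one htm).2 hs1⟩
    have heq : (s / tm) • ((-tm) • g) = (-s) • g := by
      rw [smul_smul]; congr 1; field_simp
    rwa [heq, neg_smul, ← sub_eq_add_neg] at this
  -- ‖g‖ ≥ 1
  have hub : ∀ s : ℝ, 0 ≤ s → s ≤ tp → u (z + s • g) - u z ≤ s * ‖g‖ := by
    intro s hs0 hs1
    have := hlip _ (memP s hs0 hs1) _ hz
    rwa [add_sub_cancel_left, norm_smul, Real.norm_eq_abs, abs_of_nonneg hs0] at this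
  have hg1 : 1 ≤ ‖g‖ := by
    have := hub tp htp0 le_rfl
    rw [htpe] at this
    nlinarith
  -- ‖g‖ ≤ 1 via derivative
  have hF : HasFDerivAt u (InnerProductSpace.toDual ℝ (Euc d) g) z :=
    hdiff.hasGradientAt.hasFDerivAt
  have hline : HasDerivAt (fun s : ℝ => z + s • g) g 0 := by
    simpa using ((hasDerivAt_id (0:ℝ)).smul_const g).const_add z
  have hF' : HasFDerivAt u (InnerProductSpace.toDual ℝ (Euc d) g)
      ((fun s : ℝ => z + s • g) 0) := by simpa using hF
  have hφ : HasDerivAt (fun s : ℝ => u (z + s • g)) (‖g‖ ^ 2) 0 := by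
    have h := hF'.comp_hasDerivAt 0 hline
    have hv : (InnerProductSpace.toDual ℝ (Euc d) g) g = ‖g‖ ^ 2 := by
      rw [InnerProductSpace.toDual_apply_apply, real_inner_self_eq_norm_sq]
    rw [hv] at h
    exact h
  have hgle : ‖g‖ ^ 2 ≤ ‖g‖ := by
    have hs := hasDerivAt_iff_tendsto_slope.1 hφ
    have hs' : Filter.Tendsto (slope (fun s : ℝ => u (z + s • g)) 0) (nhdsWithin 0 (Set.Ioi 0))
        (nhds (‖g‖ ^ 2)) :=
      hs.mono_left (nhdsWithin_mono 0 (by intro x hx; exact ne_of_gt hx))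
    refine le_of_tendsto hs' ?_
    filter_upwards [Ioc_mem_nhdsGT_of_mem (Set.mem_Ico.2 ⟨le_rfl, htp⟩)] with s hs
    rw [slope_def_field]
    simp only [sub_zero]
    rw [div_le_iff₀ hs.1]
    have h0 : u (z + (0:ℝ) • g) = u z := by simp
    calc u (z + s • g) - u (z + (0:ℝ) • g) = u (z + s • g) - u z := by rw [h0]
      _ ≤ s * ‖g‖ := hub s hs.1.le hs.2
      _ = ‖g‖ * s := mul_comm _ _
  have hgnorm : ‖g‖ = 1 := le_antisymm (by nlinarith) hg1
  have hσtp : σ ≤ tp := htpσ.le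
  have hσtm : σ ≤ tm := htmσ.le
  refine ⟨hgnorm, ⟨memP σ hσ.le hσtp, ?_⟩, ⟨memM σ hσ.le hσtm, ?_⟩⟩
  · -- u (z + σ•g) - u z = σ
    have h1 : u (z + σ • g) - u z ≤ σ := by
      have := hub σ hσ.le hσtp; rwa [hgnorm, mul_one] at this
    have h2 : u (z + tp • g) - u (z + σ • g) ≤ tp - σ := by
      have := hlip _ htpΩ _ (memP σ hσ.le hσtp)
      have he : (z + tp • g) - (z + σ • g) = (tp - σ) • g := by
        rw [sub_smul]; abel
      rwa [he, norm_smul, Real.norm_eq_abs, abs_of_nonneg (by linarith), hgnorm, mul_one] at this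
    linarith
  · -- u (z - σ•g) - u z = -σ
    have h1 : u z - u (z - σ • g) ≤ σ := by
      have := hlip _ hz _ (memM σ hσ.le hσtm)
      have he : z - (z - σ • g) = σ • g := by abel
      rwa [he, norm_smul, Real.norm_eq_abs, abs_of_nonneg hσ.le, hgnorm, mul_one] at this
    have h2 : u (z - σ • g) - u (z - tm • g) ≤ tm - σ := by
      have := hlip _ (memM σ hσ.le hσtm) _ htmΩ
      have he : (z - σ • g) - (z - tm • g) = (tm - σ) • g := by
        rw [sub_smul]; abel
      rwa [he, norm_smul, Real.norm_eq_abs, abs_of_nonneg (by linarith), hgnorm, mul_one] at this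
    linarith


set_option maxHeartbeats 2000000 in
/-- the gradient of `u` is `4j`-Lipschitz on the set `A_j` of
differentiability points at distance more than `1/j` from ray endpoints. -/
theorem gradient_lipschitz_away_from_endpoints {d : ℕ} (Ω : Set (Euc d))
    (hΩc : IsCompact Ω) (hΩconv : Convex ℝ Ω)
    (u : Euc d → ℝ) (hu : LipschitzOnWith 1 u Ω)
    (j : ℕ) (hj : 0 < j) :
    LipschitzOnWith (4 * j) (gradient u)
      {z ∈ Ω | DifferentiableAt ℝ u z ∧
        1 / (j : ℝ) < min (ellMinus u Ω z) (ellPlus u Ω z)} := by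
  set σ : ℝ := 1 / (j : ℝ) with hσdef
  have hjR : (0:ℝ) < j := by exact_mod_cast hj
  have hσ : 0 < σ := by positivity
  apply LipschitzOnWith.of_dist_le_mul
  rintro x ⟨hxΩ, hxd, hxℓ⟩ y ⟨hyΩ, hyd, hyℓ⟩
  obtain ⟨hgx, ⟨hxpΩ, hxpe⟩, ⟨hxmΩ, hxme⟩⟩ :=
    key Ω hΩconv u hu σ hσ x hxΩ hxd (lt_of_lt_of_le hxℓ (min_le_left _ _))
      (lt_of_lt_of_le hxℓ (min_le_right _ _))
  obtain ⟨hgy, ⟨hypΩ, hype⟩, ⟨hymΩ, hyme⟩⟩ :=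
    key Ω hΩconv u hu σ hσ y hyΩ hyd (lt_of_lt_of_le hyℓ (min_le_left _ _))
      (lt_of_lt_of_le hyℓ (min_le_right _ _))
  set gx := gradient u x
  set gy := gradient u y
  have hlip : ∀ a ∈ Ω, ∀ b ∈ Ω, u a - u b ≤ ‖a - b‖ := by
    intro a ha b hb
    have h := hu.dist_le_mul a ha b hb
    rw [Real.dist_eq, dist_eq_norm] at h
    simp only [NNReal.coe_one, one_mul] at h
    linarith [(abs_le.1 h).2]
  set e := x - y with he
  set v := σ • (gx + gy) with hv
  have hA1 : u x - u y + 2 * σ ≤ ‖e + v‖ := by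
    have h := hlip _ hxpΩ _ hymΩ
    have hveq : (x + σ • gx) - (y - σ • gy) = e + v := by
      rw [hv, he, smul_add]; abel
    rw [hveq] at h
    linarith
  have hA2 : u y - u x + 2 * σ ≤ ‖v - e‖ := by
    have h := hlip _ hypΩ _ hxmΩ
    have hveq : (y + σ • gy) - (x - σ • gx) = v - e := by
      rw [hv, he, smul_add]; abel
    rw [hveq] at h
    linarith
  have hpar1 : ‖e + v‖ * ‖e + v‖ + ‖e - v‖ * ‖e - v‖ = 2 * (‖e‖ * ‖e‖ + ‖v‖ * ‖v‖) :=
    by have := parallelogram_law_with_norm ℝ e v; simpa only [sq] using this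
  have hev : ‖v - e‖ = ‖e - v‖ := norm_sub_rev _ _
  have hsum : 4 * σ ≤ ‖e + v‖ + ‖e - v‖ := by rw [← hev]; linarith
  have hsq : 16 * σ ^ 2 ≤ 4 * (‖e‖ ^ 2 + ‖v‖ ^ 2) := by
    nlinarith [norm_nonneg (e + v), norm_nonneg (e - v), sq_nonneg (‖e + v‖ - ‖e - v‖)]
  have hvnorm : ‖v‖ ^ 2 = σ ^ 2 * ‖gx + gy‖ ^ 2 := by
    rw [hv, norm_smul, Real.norm_eq_abs, abs_of_nonneg hσ.le, mul_pow]
  have hpar2 : ‖gx + gy‖ * ‖gx + gy‖ + ‖gx - gy‖ * ‖gx - gy‖ =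
      2 * (‖gx‖ * ‖gx‖ + ‖gy‖ * ‖gy‖) := by
    have := parallelogram_law_with_norm ℝ gx gy; simpa only [sq] using this
  have hgsum : ‖gx + gy‖ ^ 2 = 4 - ‖gx - gy‖ ^ 2 := by
    rw [hgx, hgy] at hpar2
    rw [pow_two, pow_two]
    linarith [hpar2]
  have hv2 : ‖v‖ ^ 2 = 4 * σ ^ 2 - σ ^ 2 * ‖gx - gy‖ ^ 2 := by
    rw [hvnorm, hgsum]; ring
  have hkey : σ ^ 2 * ‖gx - gy‖ ^ 2 ≤ ‖e‖ ^ 2 := by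
    linarith [hsq, hv2]
  have h1 : σ * ‖gx - gy‖ ≤ ‖e‖ := by
    nlinarith [norm_nonneg (gx - gy), norm_nonneg e,
      mul_nonneg hσ.le (norm_nonneg (gx - gy))]
  have hfin : ‖gx - gy‖ ≤ (1 / σ) * ‖e‖ := by
    rw [one_div, ← div_eq_inv_mul, le_div_iff₀ hσ]
    linarith [h1, mul_comm σ ‖gx - gy‖]
  rw [dist_eq_norm, dist_eq_norm, ← he]
  have hcast : ((4 * j : NNReal) : ℝ) = 4 * (j : ℝ) := by push_cast; ring
  rw [hcast]
  have : (1 / σ) = (j : ℝ) := by rw [hσdef]; field_simp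
  rw [this] at hfin
  calc ‖gx - gy‖ ≤ (j : ℝ) * ‖e‖ := hfin
    _ ≤ 4 * (j : ℝ) * ‖e‖ := by nlinarith [norm_nonneg e]
end
end

section
/- Let μ, ν be probability measures on a compact convex Ω ⊂ ℝ^d with μ absolutely continuous with respect to Lebesgue measure, let u₀ be a Kantorovich potential and T₀ an optimal transport map for (μ,ν) with the Euclidean cost |x−y|. Then for μ-almost every x: if x ≠ T₀(x), then u₀ is differentiable at x and −∇u₀(x) = (T₀(x) − x)/|T₀(x) − x|. -/
open MeasureTheory

noncomputable section

/-- The Wasserstein-1 distance, defined through Kantorovich duality as the supremum of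
`∫ u dμ - ∫ u dν` over 1-Lipschitz functions `u`. -/
def W1 {d : ℕ} (μ ν : Measure (Euc d)) : ℝ :=
  sSup {r : ℝ | ∃ u : Euc d → ℝ, LipschitzWith 1 u ∧ r = (∫ x, u x ∂μ) - ∫ y, u y ∂ν}

/-- `u` is a Kantorovich potential for the pair `(μ, ν)`. -/
def IsKantorovichPotential {d : ℕ} (u : Euc d → ℝ) (μ ν : Measure (Euc d)) : Prop :=
  LipschitzWith 1 u ∧ (∫ x, u x ∂μ) - ∫ y, u y ∂ν = W1 μ ν

/-- `T` is an optimal transport map for the pair `(μ, ν)`. -/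
def IsOptimalMap {d : ℕ} (T : Euc d → Euc d) (μ ν : Measure (Euc d)) : Prop :=
  Measure.map T μ = ν ∧ (∫ x, ‖x - T x‖ ∂μ) = W1 μ ν

/-- The minimal transport length `ℓ₀(T) = essinf_μ |Id - T|`. -/
def ell0 {d : ℕ} (T : Euc d → Euc d) (μ : Measure (Euc d)) : ℝ :=
  essInf (fun x => ‖x - T x‖) μ

/-- μ-a.e., if `x ≠ T₀(x)` then `u₀` is differentiable at `x` and
`-∇u₀(x)` is the unit vector pointing from `x` to `T₀(x)`. -/
theorem grad_potential_is_transport_direction {d : ℕ} (Ω : Set (Euc d))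
    (hΩc : IsCompact Ω) (hΩconv : Convex ℝ Ω)
    (μ ν : Measure (Euc d)) [IsProbabilityMeasure μ] [IsProbabilityMeasure ν]
    (hμΩ : μ Ωᶜ = 0) (hνΩ : ν Ωᶜ = 0) (hac : μ ≪ volume)
    (u₀ : Euc d → ℝ) (hu₀ : IsKantorovichPotential u₀ μ ν)
    (T₀ : Euc d → Euc d) (hT₀ : IsOptimalMap T₀ μ ν) :
    ∀ᵐ x ∂μ, x ≠ T₀ x → DifferentiableAt ℝ u₀ x ∧
      -gradient u₀ x = ‖T₀ x - x‖⁻¹ • (T₀ x - x) := by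
  obtain ⟨hlip, hupot⟩ := hu₀
  obtain ⟨hmap, hopt⟩ := hT₀
  have hTm : AEMeasurable T₀ μ := by
    by_contra h
    rw [Measure.map_of_not_aemeasurable h] at hmap
    exact (IsProbabilityMeasure.ne_zero ν) hmap.symm
  have hΩmeas : MeasurableSet Ω := hΩc.isClosed.measurableSet
  have hxΩ : ∀ᵐ x ∂μ, x ∈ Ω := by
    rw [ae_iff]; exact hμΩ
  have hTΩ : ∀ᵐ x ∂μ, T₀ x ∈ Ω := by
    rw [ae_iff]
    have h1 : μ (T₀ ⁻¹' Ωᶜ) = ν Ωᶜ := by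
      rw [← hmap, Measure.map_apply_of_aemeasurable hTm hΩmeas.compl]
    exact h1.trans hνΩ
  obtain ⟨C, hC⟩ := hΩc.isBounded.exists_norm_le
  -- integrability facts
  have hdist_int : Integrable (fun x => ‖x - T₀ x‖) μ := by
    refine Integrable.mono' (integrable_const (C + C))
      ((aemeasurable_id.sub hTm).norm.aestronglyMeasurable) ?_
    filter_upwards [hxΩ, hTΩ] with x h1 h2
    simp only [norm_norm]
    exact (norm_sub_le _ _).trans (add_le_add (hC _ h1) (hC _ h2))
  have hu_cont : Continuous u₀ := hlip.continuous
  have hub : ∀ y ∈ Ω, |u₀ y| ≤ |u₀ 0| + C := by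
    intro y hy
    have h1 := hlip.dist_le_mul y 0
    rw [Real.dist_eq, dist_zero_right, NNReal.coe_one, one_mul] at h1
    have h2 := abs_sub_abs_le_abs_sub (u₀ y) (u₀ 0)
    have := hC y hy
    linarith
  have hu_int : Integrable u₀ μ := by
    refine Integrable.mono' (integrable_const (|u₀ 0| + C))
      hu_cont.aestronglyMeasurable ?_
    filter_upwards [hxΩ] with x h1 using hub x h1
  have huT_int : Integrable (fun x => u₀ (T₀ x)) μ := by
    refine Integrable.mono' (integrable_const (|u₀ 0| + C))
      (hu_cont.measurable.comp_aemeasurable hTm).aestronglyMeasurable ?_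
    filter_upwards [hTΩ] with x h1 using hub _ h1
  have hνint : ∫ y, u₀ y ∂ν = ∫ x, u₀ (T₀ x) ∂μ := by
    rw [← hmap, integral_map hTm hu_cont.aestronglyMeasurable]
  have key : ∀ᵐ x ∂μ, u₀ x - u₀ (T₀ x) = ‖x - T₀ x‖ := by
    have hnn : 0 ≤ fun x => ‖x - T₀ x‖ - (u₀ x - u₀ (T₀ x)) := by
      intro x
      have h1 := hlip.dist_le_mul x (T₀ x)
      rw [Real.dist_eq, dist_eq_norm, NNReal.coe_one, one_mul] at h1
      have h2 := (abs_le.mp (by linarith : |u₀ x - u₀ (T₀ x)| ≤ ‖x - T₀ x‖)).2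
      simpa using h2
    have hint : Integrable (fun x => ‖x - T₀ x‖ - (u₀ x - u₀ (T₀ x))) μ :=
      hdist_int.sub (hu_int.sub huT_int)
    have hW : (∫ x, u₀ x ∂μ) - ∫ x, u₀ (T₀ x) ∂μ = W1 μ ν := by
      rw [← hνint]; exact hupot
    have hzero : ∫ x, (‖x - T₀ x‖ - (u₀ x - u₀ (T₀ x))) ∂μ = 0 := by
      rw [integral_sub (f := fun x => ‖x - T₀ x‖) (g := fun x => u₀ x - u₀ (T₀ x))
        hdist_int (hu_int.sub huT_int), integral_sub hu_int huT_int, hopt, hW, sub_self]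
    have := (integral_eq_zero_iff_of_nonneg hnn hint).mp hzero
    filter_upwards [this] with x hx
    have : ‖x - T₀ x‖ - (u₀ x - u₀ (T₀ x)) = 0 := hx
    linarith
  have hdiff : ∀ᵐ x ∂μ, DifferentiableAt ℝ u₀ x :=
    (hlip.ae_differentiableAt (μ := volume)).filter_mono hac.ae_le
  filter_upwards [key, hdiff] with x hkey hdx hne
  refine ⟨hdx, ?_⟩
  set v : Euc d := T₀ x - x with hv
  have hr : 0 < ‖v‖ := norm_pos_iff.mpr (sub_ne_zero.mpr (Ne.symm hne))
  set r : ℝ := ‖v‖ with hrdef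
  set e : Euc d := r⁻¹ • v with he
  have hve : v = r • e := by
    rw [he, smul_smul, mul_inv_cancel₀ hr.ne', one_smul]
  have hee : ‖e‖ = 1 := by
    rw [he, norm_smul, norm_inv, Real.norm_eq_abs, abs_of_pos hr, ← hrdef,
      inv_mul_cancel₀ hr.ne']
  have hxT : ‖x - T₀ x‖ = r := by
    rw [show x - T₀ x = -v by rw [hv]; abel, norm_neg]
  have hseg : ∀ t ∈ Set.Icc (0:ℝ) r, u₀ (x + t • e) = u₀ x - t := by
    intro t ht
    have h1 : |u₀ x - u₀ (x + t • e)| ≤ t := by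
      have h := hlip.dist_le_mul x (x + t • e)
      rw [Real.dist_eq, dist_eq_norm, NNReal.coe_one, one_mul] at h
      have hn : ‖x - (x + t • e)‖ = t := by
        rw [show x - (x + t • e) = -(t • e) by abel, norm_neg, norm_smul, hee,
          mul_one, Real.norm_eq_abs, abs_of_nonneg ht.1]
      linarith [h, hn ▸ h]
    have h2 : u₀ (x + t • e) - u₀ (T₀ x) ≤ r - t := by
      have h := hlip.dist_le_mul (x + t • e) (T₀ x)
      rw [Real.dist_eq, dist_eq_norm, NNReal.coe_one, one_mul] at h
      have hn : ‖(x + t • e) - T₀ x‖ = r - t := by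
        have hh : (x + t • e) - T₀ x = (t - r) • e := by
          rw [sub_smul, ← hve]
          rw [hv]; abel
        rw [hh, norm_smul, hee, mul_one, Real.norm_eq_abs,
          abs_of_nonpos (by linarith [ht.2]), neg_sub]
      have := (abs_le.mp h).2
      linarith [hn ▸ this]
    have h3 : u₀ x - u₀ (T₀ x) = r := by rw [hkey, hxT]
    have h1' := (abs_le.mp h1).2
    linarith
  -- derivative along the segment
  have h0 : x + (0:ℝ) • e = x := by simp
  have hline : HasDerivAt (fun t : ℝ => x + t • e) e 0 := by
    simpa using ((hasDerivAt_id (0:ℝ)).smul_const e).const_add x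
  have hφ : HasDerivAt (fun t : ℝ => u₀ (x + t • e)) (fderiv ℝ u₀ x e) 0 := by
    have hF : HasFDerivAt u₀ (fderiv ℝ u₀ x) ((fun t : ℝ => x + t • e) 0) := by
      simpa [h0] using hdx.hasFDerivAt
    exact hF.comp_hasDerivAt 0 hline
  have hφ' : HasDerivWithinAt (fun t : ℝ => u₀ (x + t • e)) (-1) (Set.Icc 0 r) 0 := by
    have hg : HasDerivWithinAt (fun t : ℝ => u₀ x - t) (-1) (Set.Icc 0 r) 0 := by
      simpa using ((hasDerivAt_id (0:ℝ)).const_sub (u₀ x)).hasDerivWithinAt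
    exact hg.congr (fun t ht => hseg t ht) (by simp [hseg 0 ⟨le_refl 0, hr.le⟩])
  have huniq : fderiv ℝ u₀ x e = -1 :=
    (uniqueDiffOn_Icc hr 0 ⟨le_refl 0, hr.le⟩).eq_deriv _ hφ.hasDerivWithinAt hφ'
  have hinner : (inner ℝ (gradient u₀ x) e : ℝ) = -1 := by
    show (inner ℝ ((InnerProductSpace.toDual ℝ (Euc d)).symm (fderiv ℝ u₀ x)) e : ℝ) = -1
    rw [InnerProductSpace.toDual_symm_apply]
    exact huniq
  have hnorm : ‖gradient u₀ x‖ ≤ 1 := by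
    have h1 : ‖fderiv ℝ u₀ x‖ ≤ 1 := by
      simpa using hdx.hasFDerivAt.le_of_lipschitz hlip
    calc ‖gradient u₀ x‖ = ‖fderiv ℝ u₀ x‖ :=
          (InnerProductSpace.toDual ℝ (Euc d)).symm.norm_map _
      _ ≤ 1 := h1
  have hsq : ‖gradient u₀ x + e‖ ^ 2 ≤ 0 := by
    rw [norm_add_sq_real, hinner, hee]
    nlinarith [norm_nonneg (gradient u₀ x)]
  have hz : gradient u₀ x + e = 0 := by
    have := sq_nonneg ‖gradient u₀ x + e‖
    have hn : ‖gradient u₀ x + e‖ = 0 := by nlinarith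
    exact norm_eq_zero.mp hn
  exact neg_eq_of_add_eq_zero_right hz
end
end

section
/- Let μ ≪ Lebesgue, u₀ a Kantorovich potential and T₀ an optimal transport map for (μ,ν), and let ℓ₀(T₀) = essinf_μ |x − T₀(x)|. If the step size η₀ satisfies 0 < η₀ < ℓ₀(T₀), and f₀(x) = x − η₀∇u₀(x) where ∇u₀ exists and f₀(x) = x otherwise, then u₀ is also a Kantorovich potential for the pair ((f₀)_#μ, ν). -/
open MeasureTheory

noncomputable section

lemma lip_abs_le {d : ℕ} {u : Euc d → ℝ} (hu : LipschitzWith 1 u) (a b : Euc d) :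
    |u a - u b| ≤ ‖a - b‖ := by
  have := hu.dist_le_mul a b
  rw [Real.dist_eq, dist_eq_norm] at this
  simpa using this

lemma step_along_ray {d : ℕ} (u₀ : Euc d → ℝ) (hlip : LipschitzWith 1 u₀)
    (x y : Euc d) (hd : DifferentiableAt ℝ u₀ x)
    (heq : u₀ x - u₀ y = ‖x - y‖) (η : ℝ) (hη : 0 < η) (hηy : η < ‖x - y‖) :
    u₀ (x - η • gradient u₀ x) - u₀ y = ‖(x - η • gradient u₀ x) - y‖ ∧
      ‖(x - η • gradient u₀ x) - x‖ ≤ η := by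
  set L : ℝ := ‖x - y‖ with hL
  have hLpos : 0 < L := lt_trans hη hηy
  set w : Euc d := L⁻¹ • (y - x) with hw
  have hwnorm : ‖w‖ = 1 := by
    rw [hw, norm_smul, norm_inv, Real.norm_eq_abs, abs_of_pos hLpos, ← norm_neg (y - x),
      neg_sub, ← hL, inv_mul_cancel₀ hLpos.ne']
  have hyx : y - x = L • w := by
    rw [hw, smul_smul, mul_inv_cancel₀ hLpos.ne', one_smul]
  -- affine along segment
  have haff : ∀ t ∈ Set.Icc (0:ℝ) L, u₀ (x + t • w) = u₀ x - t := by
    intro t ⟨ht0, htL⟩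
    have h1 : u₀ x - u₀ (x + t • w) ≤ t := by
      have := le_trans (neg_abs_le _) (neg_le_neg (lip_abs_le hlip x (x + t • w)))
      have h := lip_abs_le hlip x (x + t • w)
      have : ‖x - (x + t • w)‖ = t := by
        rw [sub_add_cancel_left, norm_neg, norm_smul, hwnorm, Real.norm_eq_abs,
          abs_of_nonneg ht0, mul_one]
      calc u₀ x - u₀ (x + t • w) ≤ |u₀ x - u₀ (x + t • w)| := le_abs_self _
        _ ≤ ‖x - (x + t • w)‖ := h
        _ = t := this
    have h2 : u₀ (x + t • w) - u₀ y ≤ L - t := by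
      have h := lip_abs_le hlip (x + t • w) y
      have hnorm : ‖(x + t • w) - y‖ = L - t := by
        have : (x + t • w) - y = (t - L) • w := by
          rw [sub_smul, ← hyx]; abel
        rw [this, norm_smul, hwnorm, Real.norm_eq_abs, mul_one, abs_of_nonpos (by linarith)]
        ring
      calc u₀ (x + t • w) - u₀ y ≤ |u₀ (x + t • w) - u₀ y| := le_abs_self _
        _ ≤ ‖(x + t • w) - y‖ := h
        _ = L - t := hnorm
    have hsum : (u₀ x - u₀ (x + t • w)) + (u₀ (x + t • w) - u₀ y) = L := by
      rw [← heq]; ring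
    linarith
  -- derivative along w is -1
  have hgderiv : (fderiv ℝ u₀ x) w = -1 := by
    have hc : HasDerivAt (fun t : ℝ => x + t • w) w 0 := by
      have h1 : HasDerivAt (fun t : ℝ => t • w) ((1:ℝ) • w) 0 :=
        (hasDerivAt_id (0 : ℝ)).smul_const w
      rw [one_smul] at h1
      exact h1.const_add x
    have hfd : HasFDerivAt u₀ (fderiv ℝ u₀ x) ((fun t : ℝ => x + t • w) 0) := by
      simpa using hd.hasFDerivAt
    have hg : HasDerivAt (fun t : ℝ => u₀ (x + t • w)) ((fderiv ℝ u₀ x) w) 0 :=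
      hfd.comp_hasDerivAt 0 hc
    have hA : HasDerivWithinAt (fun t : ℝ => u₀ (x + t • w)) ((fderiv ℝ u₀ x) w)
        (Set.Icc 0 L) 0 := hg.hasDerivWithinAt
    have hB : HasDerivWithinAt (fun t : ℝ => u₀ (x + t • w)) (-1) (Set.Icc 0 L) 0 := by
      have hb : HasDerivAt (fun t : ℝ => u₀ x - t) (-1) 0 := by
        simpa using (hasDerivAt_id (0:ℝ)).const_sub (u₀ x)
      exact hb.hasDerivWithinAt.congr (fun t ht => haff t ht) (by simpa using haff 0 ⟨le_refl _, hLpos.le⟩)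
    exact (uniqueDiffOn_Icc hLpos 0 ⟨le_refl _, hLpos.le⟩).eq_deriv _ hA hB
  -- gradient = -w
  have hinner : (inner ℝ (gradient u₀ x) w : ℝ) = -1 := by
    rw [← hgderiv, gradient, ← InnerProductSpace.toDual_apply_apply,
      (InnerProductSpace.toDual ℝ (Euc d)).apply_symm_apply]
  have hgnorm : ‖gradient u₀ x‖ ≤ 1 := by
    rw [gradient]
    rw [(InnerProductSpace.toDual ℝ (Euc d)).symm.norm_map]
    simpa using norm_fderiv_le_of_lipschitz ℝ hlip
  have hgw : gradient u₀ x = -w := by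
    have h0 : ‖gradient u₀ x + w‖ ^ 2 ≤ 0 := by
      rw [norm_add_sq_real, hinner, hwnorm]
      nlinarith [norm_nonneg (gradient u₀ x)]
    have : gradient u₀ x + w = 0 := by
      have := norm_nonneg (gradient u₀ x + w)
      have h1 : ‖gradient u₀ x + w‖ = 0 := by nlinarith [norm_nonneg (gradient u₀ x)]
      exact norm_eq_zero.mp h1
    exact eq_neg_of_add_eq_zero_left this
  -- conclude
  have hz : x - η • gradient u₀ x = x + η • w := by
    rw [hgw, smul_neg, sub_neg_eq_add]
  have hnormzy : ‖(x + η • w) - y‖ = L - η := by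
    have : (x + η • w) - y = (η - L) • w := by
      rw [sub_smul, ← hyx]; abel
    rw [this, norm_smul, hwnorm, Real.norm_eq_abs, mul_one, abs_of_nonpos (by linarith)]
    ring
  refine ⟨?_, ?_⟩
  · rw [hz, hnormzy, haff η ⟨hη.le, hηy.le⟩]
    linarith
  · rw [hz]
    have : (x + η • w) - x = η • w := by abel
    rw [this, norm_smul, hwnorm, Real.norm_eq_abs, mul_one, abs_of_pos hη]

/-- if `0 < η₀ < ℓ₀(T₀)`, then `u₀` is still a Kantorovich potential for
the pair `((f₀)_#μ, ν)`, where `f₀ = Id - η₀ ∇u₀` (extended by the identity where `∇u₀`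
does not exist). -/
theorem potential_persists_after_step {d : ℕ} (Ω : Set (Euc d))
    (hΩc : IsCompact Ω) (hΩconv : Convex ℝ Ω)
    (μ ν : Measure (Euc d)) [IsProbabilityMeasure μ] [IsProbabilityMeasure ν]
    (hμΩ : μ Ωᶜ = 0) (hνΩ : ν Ωᶜ = 0) (hac : μ ≪ volume)
    (u₀ : Euc d → ℝ) (hu₀ : IsKantorovichPotential u₀ μ ν)
    (T₀ : Euc d → Euc d) (hT₀ : IsOptimalMap T₀ μ ν)
    (η₀ : ℝ) (hη₀pos : 0 < η₀) (hη₀ : η₀ < ell0 T₀ μ)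
    (f₀ : Euc d → Euc d) (hf₀m : Measurable f₀)
    (hf₀ : ∀ x, DifferentiableAt ℝ u₀ x → f₀ x = x - η₀ • gradient u₀ x)
    (hf₀' : ∀ x, ¬ DifferentiableAt ℝ u₀ x → f₀ x = x) :
    IsKantorovichPotential u₀ (Measure.map f₀ μ) ν := by
  obtain ⟨hu₀lip, hu₀eq⟩ := hu₀
  obtain ⟨hT₀map, hT₀eq⟩ := hT₀
  have hνne : (ν : Measure (Euc d)) ≠ 0 := IsProbabilityMeasure.ne_zero ν
  have hT₀ae : AEMeasurable T₀ μ := by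
    by_contra h
    rw [Measure.map_of_not_aemeasurable h] at hT₀map
    exact hνne hT₀map.symm
  have hΩm : MeasurableSet Ω := hΩc.isClosed.measurableSet
  have hΩae : ∀ᵐ x ∂μ, x ∈ Ω := by
    rw [ae_iff]; exact hμΩ
  have hT₀Ω : ∀ᵐ x ∂μ, T₀ x ∈ Ω := by
    rw [ae_iff]
    have h : μ (T₀ ⁻¹' Ωᶜ) = 0 := by
      rw [← Measure.map_apply_of_aemeasurable hT₀ae hΩm.compl, hT₀map]; exact hνΩ
    exact h
  obtain ⟨C, hC⟩ : ∃ C, ∀ x ∈ Ω, ‖x‖ ≤ C := hΩc.isBounded.exists_norm_le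
  -- integrability helper
  have hint : ∀ u : Euc d → ℝ, LipschitzWith 1 u → ∀ g : Euc d → Euc d, AEMeasurable g μ →
      (∀ᵐ x ∂μ, ‖g x‖ ≤ C + η₀) → Integrable (fun x => u (g x)) μ := by
    intro u hu g hg hbd
    refine Integrable.mono' (integrable_const (|u 0| + (C + η₀)))
      ((hu.continuous.measurable.comp_aemeasurable hg).aestronglyMeasurable) ?_
    filter_upwards [hbd] with x hx
    rw [Real.norm_eq_abs]
    have h1 : |u (g x) - u 0| ≤ ‖g x - 0‖ := lip_abs_le hu _ _
    rw [sub_zero] at h1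
    calc |u (g x)| = |(u (g x) - u 0) + u 0| := by ring_nf
      _ ≤ |u (g x) - u 0| + |u 0| := abs_add_le _ _
      _ ≤ |u 0| + (C + η₀) := by linarith
  have hgx : ∀ᵐ x ∂μ, ‖(id x : Euc d)‖ ≤ C + η₀ := by
    filter_upwards [hΩae] with x hx
    have := hC x hx
    simp only [id]
    linarith
  have hgT : ∀ᵐ x ∂μ, ‖T₀ x‖ ≤ C + η₀ := by
    filter_upwards [hT₀Ω] with x hx
    have := hC _ hx
    linarith
  have hiborm : Integrable (fun x => ‖x - T₀ x‖) μ := by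
    refine Integrable.mono' (integrable_const (2 * (C + η₀)))
      ((aemeasurable_id.sub hT₀ae).norm.aestronglyMeasurable) ?_
    filter_upwards [hgx, hgT] with x h1 h2
    simp only [id] at h1
    rw [Real.norm_eq_abs, abs_of_nonneg (norm_nonneg _)]
    calc ‖x - T₀ x‖ ≤ ‖x‖ + ‖T₀ x‖ := norm_sub_le _ _
      _ ≤ 2 * (C + η₀) := by linarith
  have hTint : Integrable (fun x => u₀ (T₀ x)) μ := hint u₀ hu₀lip T₀ hT₀ae hgT
  have hidint : Integrable u₀ μ := by
    simpa using hint u₀ hu₀lip id aemeasurable_id hgx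
  have hiTint : ∫ x, u₀ (T₀ x) ∂μ = ∫ y, u₀ y ∂ν := by
    rw [← hT₀map, integral_map hT₀ae hu₀lip.continuous.aestronglyMeasurable]
  have hpot : ∀ᵐ x ∂μ, u₀ x - u₀ (T₀ x) = ‖x - T₀ x‖ := by
    have hsub : Integrable (fun x => u₀ x - u₀ (T₀ x)) μ := hidint.sub hTint
    have hIeq : ∫ x, (‖x - T₀ x‖ - (u₀ x - u₀ (T₀ x))) ∂μ = 0 := by
      rw [integral_sub hiborm hsub, integral_sub hidint hTint, hiTint, hu₀eq, hT₀eq]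
      ring
    have hnn : 0 ≤ᵐ[μ] fun x => ‖x - T₀ x‖ - (u₀ x - u₀ (T₀ x)) :=
      Filter.Eventually.of_forall fun x => by
        have h := le_trans (le_abs_self _) (lip_abs_le hu₀lip x (T₀ x))
        simp only [Pi.zero_apply]
        linarith
    have hz := (integral_eq_zero_iff_of_nonneg_ae hnn
      (hiborm.sub hsub)).mp hIeq
    filter_upwards [hz] with x hx
    simp only [Pi.zero_apply] at hx
    linarith
  have hdiffae : ∀ᵐ x ∂μ, DifferentiableAt ℝ u₀ x :=
    hac.ae_le (hu₀lip.ae_differentiableAt (μ := volume))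
  have hL0 : ∀ᵐ x ∂μ, η₀ < ‖x - T₀ x‖ := by
    simp only [ell0, essInf] at hη₀
    exact Filter.eventually_lt_of_lt_liminf hη₀
      (Filter.isBoundedUnder_of ⟨0, fun x => norm_nonneg _⟩)
  have hGood : ∀ᵐ x ∂μ, u₀ (f₀ x) - u₀ (T₀ x) = ‖f₀ x - T₀ x‖ ∧ ‖f₀ x - x‖ ≤ η₀ := by
    filter_upwards [hdiffae, hpot, hL0] with x hdx hpx hlx
    rw [hf₀ x hdx]
    exact step_along_ray u₀ hu₀lip x (T₀ x) hdx hpx η₀ hη₀pos hlx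
  have hgf : ∀ᵐ x ∂μ, ‖f₀ x‖ ≤ C + η₀ := by
    filter_upwards [hGood, hΩae] with x hx hxΩ
    have hCx := hC x hxΩ
    have h : (f₀ x - x) + x = f₀ x := by abel
    calc ‖f₀ x‖ = ‖(f₀ x - x) + x‖ := by rw [h]
      _ ≤ ‖f₀ x - x‖ + ‖x‖ := norm_add_le _ _
      _ ≤ C + η₀ := by linarith [hx.2]
  have hIb : Integrable (fun x => ‖f₀ x - T₀ x‖) μ := by
    refine Integrable.mono' (integrable_const (2 * (C + η₀)))
      ((hf₀m.aemeasurable.sub hT₀ae).norm.aestronglyMeasurable) ?_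
    filter_upwards [hgf, hgT] with x h1 h2
    rw [Real.norm_eq_abs, abs_of_nonneg (norm_nonneg _)]
    calc ‖f₀ x - T₀ x‖ ≤ ‖f₀ x‖ + ‖T₀ x‖ := norm_sub_le _ _
      _ ≤ 2 * (C + η₀) := by linarith
  have hub : ∀ u : Euc d → ℝ, LipschitzWith 1 u →
      (∫ x, u x ∂(Measure.map f₀ μ)) - ∫ y, u y ∂ν ≤ ∫ x, ‖f₀ x - T₀ x‖ ∂μ := by
    intro u hu
    have h1 : ∫ x, u x ∂(Measure.map f₀ μ) = ∫ x, u (f₀ x) ∂μ :=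
      integral_map hf₀m.aemeasurable hu.continuous.aestronglyMeasurable
    have h2 : ∫ y, u y ∂ν = ∫ x, u (T₀ x) ∂μ := by
      rw [← hT₀map, integral_map hT₀ae hu.continuous.aestronglyMeasurable]
    have hif : Integrable (fun x => u (f₀ x)) μ := hint u hu f₀ hf₀m.aemeasurable hgf
    have hiT : Integrable (fun x => u (T₀ x)) μ := hint u hu T₀ hT₀ae hgT
    rw [h1, h2, ← integral_sub hif hiT]
    refine integral_mono_ae (hif.sub hiT) hIb ?_
    exact Filter.Eventually.of_forall fun x =>
      le_trans (le_abs_self _) (lip_abs_le hu _ _)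
  have heqU : (∫ x, u₀ x ∂(Measure.map f₀ μ)) - ∫ y, u₀ y ∂ν = ∫ x, ‖f₀ x - T₀ x‖ ∂μ := by
    have h1 : ∫ x, u₀ x ∂(Measure.map f₀ μ) = ∫ x, u₀ (f₀ x) ∂μ :=
      integral_map hf₀m.aemeasurable hu₀lip.continuous.aestronglyMeasurable
    have h2 : ∫ y, u₀ y ∂ν = ∫ x, u₀ (T₀ x) ∂μ := by
      rw [← hT₀map, integral_map hT₀ae hu₀lip.continuous.aestronglyMeasurable]
    have hif : Integrable (fun x => u₀ (f₀ x)) μ := hint u₀ hu₀lip f₀ hf₀m.aemeasurable hgf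
    rw [h1, h2, ← integral_sub hif hTint]
    exact integral_congr_ae (hGood.mono fun x hx => hx.1)
  refine ⟨hu₀lip, ?_⟩
  have hgreat : IsGreatest {r : ℝ | ∃ u : Euc d → ℝ, LipschitzWith 1 u ∧
      r = (∫ x, u x ∂(Measure.map f₀ μ)) - ∫ y, u y ∂ν} (∫ x, ‖f₀ x - T₀ x‖ ∂μ) := by
    constructor
    · exact ⟨u₀, hu₀lip, heqU.symm⟩
    · rintro r ⟨u, hu, rfl⟩
      exact hub u hu
  rw [heqU, W1]
  exact hgreat.csSup_eq.symm
end
end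

section
/- Under the same hypotheses (μ ≪ Lebesgue, u₀ Kantorovich potential, T₀ optimal map, 0 < η₀ < ℓ₀(T₀), f₀(x) = x − η₀∇u₀(x) a.e.), the pushforward μ̃ = (f₀)_#μ satisfies the exact identity W₁(μ̃, ν) = W₁(μ, ν) − η₀. -/
open MeasureTheory

noncomputable section

lemma lip_sub_le {d : ℕ} {u : Euc d → ℝ} (hu : LipschitzWith 1 u) (a b : Euc d) :
    u a - u b ≤ ‖a - b‖ := by
  have h := hu.dist_le_mul a b
  rw [NNReal.coe_one, one_mul, Real.dist_eq, dist_eq_norm] at h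
  exact (le_abs_self _).trans h

lemma lip_integrable {d : ℕ} {μ : Measure (Euc d)} [IsFiniteMeasure μ] {u : Euc d → ℝ}
    (hu : LipschitzWith 1 u) {g : Euc d → Euc d} (hg : AEMeasurable g μ) {C : ℝ}
    (hC : ∀ᵐ x ∂μ, ‖g x‖ ≤ C) : Integrable (fun x => u (g x)) μ := by
  apply Integrable.mono' (integrable_const (C + |u 0|))
    ((hu.continuous.measurable.comp_aemeasurable hg).aestronglyMeasurable)
  filter_upwards [hC] with x hx
  have h1 := lip_sub_le hu (g x) 0
  have h2 := lip_sub_le hu 0 (g x)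
  rw [sub_zero] at h1
  rw [show (0:Euc d) - g x = -(g x) by abel, norm_neg] at h2
  simp only [Function.comp_apply]
  rw [Real.norm_eq_abs, abs_le]
  constructor <;> [linarith [neg_abs_le (u 0)]; linarith [le_abs_self (u 0)]]

lemma seg_eq {d : ℕ} {u : Euc d → ℝ} (hu : LipschitzWith 1 u) {x y : Euc d}
    (heq : u x - u y = ‖x - y‖) {t : ℝ} (ht0 : 0 ≤ t) (ht1 : t ≤ 1) :
    u (x + t • (y - x)) = u x - t * ‖x - y‖ := by
  have ha : u x - u (x + t • (y - x)) ≤ t * ‖x - y‖ := by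
    have := lip_sub_le hu x (x + t • (y - x))
    have hn : ‖x - (x + t • (y - x))‖ = t * ‖x - y‖ := by
      rw [show x - (x + t • (y - x)) = t • (x - y) by module, norm_smul,
        Real.norm_eq_abs, abs_of_nonneg ht0]
    linarith
  have hb : u (x + t • (y - x)) - u y ≤ (1 - t) * ‖x - y‖ := by
    have := lip_sub_le hu (x + t • (y - x)) y
    have hn : ‖x + t • (y - x) - y‖ = (1 - t) * ‖x - y‖ := by
      rw [show x + t • (y - x) - y = (1 - t) • (x - y) by module, norm_smul,
        Real.norm_eq_abs, abs_of_nonneg (by linarith)]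
    linarith
  linarith

lemma grad_norm_le {d : ℕ} {u : Euc d → ℝ} (hu : LipschitzWith 1 u) (x : Euc d) :
    ‖gradient u x‖ ≤ 1 := by
  rw [gradient, LinearIsometryEquiv.norm_map]
  simpa using norm_fderiv_le_of_lipschitz ℝ hu (x₀ := x)

lemma grad_eq {d : ℕ} {u : Euc d → ℝ} (hu : LipschitzWith 1 u) {x y : Euc d}
    (heq : u x - u y = ‖x - y‖) (hxy : x ≠ y) (hdiff : DifferentiableAt ℝ u x) :
    gradient u x = ‖x - y‖⁻¹ • (x - y) := by
  have hr : (0:ℝ) < ‖x - y‖ := by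
    rw [norm_pos_iff]; exact sub_ne_zero.mpr hxy
  set v := y - x with hv
  have hline : HasDerivAt (fun t : ℝ => x + t • v) v 0 := by
    simpa using ((hasDerivAt_id (0:ℝ)).smul_const v).const_add x
  have hd0 : HasFDerivAt u (fderiv ℝ u x) (x + (0:ℝ) • v) := by
    simpa using hdiff.hasFDerivAt
  have hφ : HasDerivAt (fun t : ℝ => u (x + t • v)) (fderiv ℝ u x v) 0 :=
    hd0.comp_hasDerivAt 0 hline
  have hslope : fderiv ℝ u x v = -‖x - y‖ := by
    have h1 : Filter.Tendsto (slope (fun t : ℝ => u (x + t • v)) 0) (nhdsWithin 0 (Set.Ioi 0))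
        (nhds (fderiv ℝ u x v)) :=
      ((hasDerivAt_iff_tendsto_slope).mp hφ).mono_left
        (nhdsWithin_mono _ fun z hz => ne_of_gt hz)
    have h2 : Filter.Tendsto (slope (fun t : ℝ => u (x + t • v)) 0) (nhdsWithin 0 (Set.Ioi 0))
        (nhds (-‖x - y‖)) := by
      apply Filter.Tendsto.congr' _ tendsto_const_nhds
      filter_upwards [Ioo_mem_nhdsGT_of_mem (Set.mem_Ico.mpr ⟨le_refl (0:ℝ), one_pos⟩)]
        with t ht
      have h3 : u (x + t • v) = u x - t * ‖x - y‖ := seg_eq hu heq ht.1.le ht.2.le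
      have h0 : u (x + (0:ℝ) • v) = u x := by simp
      have htne : t ≠ 0 := ne_of_gt ht.1
      rw [slope_def_field, h3, h0]
      field_simp
      ring
    exact tendsto_nhds_unique h1 h2
  -- inner product identity
  have hinner : inner ℝ (gradient u x) v = (-‖x - y‖ : ℝ) := by
    rw [← hslope, gradient]
    exact InnerProductSpace.toDual_symm_apply
  set g := gradient u x with hg
  set w : Euc d := ‖x - y‖⁻¹ • (x - y) with hw
  have hwn : ‖w‖ = 1 := by
    rw [hw, norm_smul, Real.norm_eq_abs, abs_of_nonneg (inv_nonneg.mpr hr.le),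
      inv_mul_cancel₀ (ne_of_gt hr)]
  have hgw : inner ℝ g w = (1:ℝ) := by
    rw [hw, real_inner_smul_right]
    have : (x - y : Euc d) = -v := by rw [hv]; abel
    rw [this, inner_neg_right, hinner, hv, norm_sub_rev]
    field_simp
    rw [norm_neg, norm_sub_rev]; exact div_self hr.ne'
  have hz : ‖g - w‖ ^ 2 ≤ 0 := by
    rw [norm_sub_sq_real, hgw, hwn]
    have h4 : ‖g‖ ^ 2 ≤ 1 := by
      have := grad_norm_le hu x
      nlinarith [norm_nonneg g]
    nlinarith
  have : g - w = 0 := by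
    have h5 : ‖g - w‖ ^ 2 = 0 := le_antisymm hz (by positivity)
    have := pow_eq_zero_iff (n := 2) (by norm_num) |>.mp h5
    rwa [norm_eq_zero] at this
  rw [sub_eq_zero] at this
  exact this

/-- if `0 < η₀ < ℓ₀(T₀)`, then `W₁((f₀)_#μ, ν) = W₁(μ, ν) - η₀`. -/
theorem W1_decreases_exactly {d : ℕ} (Ω : Set (Euc d))
    (hΩc : IsCompact Ω) (hΩconv : Convex ℝ Ω)
    (μ ν : Measure (Euc d)) [IsProbabilityMeasure μ] [IsProbabilityMeasure ν]
    (hμΩ : μ Ωᶜ = 0) (hνΩ : ν Ωᶜ = 0) (hac : μ ≪ volume)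
    (u₀ : Euc d → ℝ) (hu₀ : IsKantorovichPotential u₀ μ ν)
    (T₀ : Euc d → Euc d) (hT₀ : IsOptimalMap T₀ μ ν)
    (η₀ : ℝ) (hη₀pos : 0 < η₀) (hη₀ : η₀ < ell0 T₀ μ)
    (f₀ : Euc d → Euc d) (hf₀m : Measurable f₀)
    (hf₀ : ∀ x, DifferentiableAt ℝ u₀ x → f₀ x = x - η₀ • gradient u₀ x)
    (hf₀' : ∀ x, ¬ DifferentiableAt ℝ u₀ x → f₀ x = x) :
    W1 (Measure.map f₀ μ) ν = W1 μ ν - η₀ := by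
  obtain ⟨hu₀lip, hu₀eq⟩ := hu₀
  obtain ⟨hT₀map, hT₀eq⟩ := hT₀
  have hT₀me : AEMeasurable T₀ μ := by
    by_contra h
    have hν0 : ν = 0 := by rw [← hT₀map, Measure.map_of_not_aemeasurable h]
    exact (IsProbabilityMeasure.ne_zero ν) hν0
  have hf₀ae : AEMeasurable f₀ μ := hf₀m.aemeasurable
  obtain ⟨R, hR⟩ := hΩc.isBounded.subset_closedBall 0
  have hxΩ : ∀ᵐ x ∂μ, ‖x‖ ≤ R := by
    have hx : ∀ᵐ x ∂μ, x ∈ Ω := by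
      rw [ae_iff]
      simpa [Set.compl_def] using hμΩ
    filter_upwards [hx] with x hx
    simpa [mem_closedBall_zero_iff] using hR hx
  have hTΩ : ∀ᵐ x ∂μ, ‖T₀ x‖ ≤ R := by
    have h0 : μ (T₀ ⁻¹' Ωᶜ) = 0 := by
      rw [← Measure.map_apply_of_aemeasurable hT₀me hΩc.isClosed.measurableSet.compl, hT₀map]
      exact hνΩ
    have hx : ∀ᵐ x ∂μ, T₀ x ∈ Ω := by
      rw [ae_iff]
      simpa [Set.preimage, Set.compl_def] using h0
    filter_upwards [hx] with x hx
    simpa [mem_closedBall_zero_iff] using hR hx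
  have hf₀close : ∀ x, ‖f₀ x - x‖ ≤ η₀ := by
    intro x
    by_cases h : DifferentiableAt ℝ u₀ x
    · rw [hf₀ x h, show x - η₀ • gradient u₀ x - x = -(η₀ • gradient u₀ x) by abel,
        norm_neg, norm_smul, Real.norm_eq_abs, abs_of_nonneg hη₀pos.le]
      have := grad_norm_le hu₀lip x
      nlinarith
    · rw [hf₀' x h]
      simp [hη₀pos.le]
  have hfΩ : ∀ᵐ x ∂μ, ‖f₀ x‖ ≤ R + η₀ := by
    filter_upwards [hxΩ] with x hx
    calc ‖f₀ x‖ = ‖(f₀ x - x) + x‖ := by rw [sub_add_cancel]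
      _ ≤ ‖f₀ x - x‖ + ‖x‖ := norm_add_le _ _
      _ ≤ η₀ + R := add_le_add (hf₀close x) hx
      _ = R + η₀ := add_comm _ _
  have hInt : ∀ (u : Euc d → ℝ), LipschitzWith 1 u →
      Integrable (fun x => u x) μ ∧ Integrable (fun x => u (T₀ x)) μ ∧
        Integrable (fun x => u (f₀ x)) μ := fun u hu =>
    ⟨lip_integrable hu aemeasurable_id hxΩ, lip_integrable hu hT₀me hTΩ,
      lip_integrable hu hf₀ae hfΩ⟩
  have hnormInt : Integrable (fun x => ‖x - T₀ x‖) μ := by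
    apply Integrable.mono' (integrable_const (R + R))
      ((aemeasurable_id.sub hT₀me).norm.aestronglyMeasurable)
    filter_upwards [hxΩ, hTΩ] with x h1 h2
    rw [norm_norm]
    calc ‖x - T₀ x‖ ≤ ‖x‖ + ‖T₀ x‖ := norm_sub_le _ _
      _ ≤ R + R := add_le_add h1 h2
  have hνint : ∀ (u : Euc d → ℝ), LipschitzWith 1 u →
      (∫ y, u y ∂ν) = ∫ x, u (T₀ x) ∂μ := by
    intro u hu
    rw [← hT₀map, integral_map hT₀me hu.continuous.aestronglyMeasurable]
  have hμ'int : ∀ (u : Euc d → ℝ), LipschitzWith 1 u →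
      (∫ y, u y ∂(Measure.map f₀ μ)) = ∫ x, u (f₀ x) ∂μ := fun u hu =>
    integral_map hf₀ae hu.continuous.aestronglyMeasurable
  have hAE : ∀ᵐ x ∂μ, u₀ x - u₀ (T₀ x) = ‖x - T₀ x‖ := by
    obtain ⟨I1, I2, _⟩ := hInt u₀ hu₀lip
    have hpt : 0 ≤ fun x => ‖x - T₀ x‖ - (u₀ x - u₀ (T₀ x)) := fun x =>
      sub_nonneg.mpr (lip_sub_le hu₀lip x (T₀ x))
    have I12 : Integrable (fun x => u₀ x - u₀ (T₀ x)) μ := I1.sub I2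
    have hint : Integrable (fun x => ‖x - T₀ x‖ - (u₀ x - u₀ (T₀ x))) μ :=
      hnormInt.sub I12
    have hzero : (∫ x, (‖x - T₀ x‖ - (u₀ x - u₀ (T₀ x))) ∂μ) = 0 := by
      rw [integral_sub hnormInt I12, integral_sub I1 I2, hT₀eq,
        ← hνint u₀ hu₀lip, hu₀eq]
      ring
    have := (integral_eq_zero_iff_of_nonneg hpt hint).mp hzero
    filter_upwards [this] with x hx
    have hx' : ‖x - T₀ x‖ - (u₀ x - u₀ (T₀ x)) = 0 := hx
    linarith
  have hdist : ∀ᵐ x ∂μ, η₀ < ‖x - T₀ x‖ := by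
    have hη₀' : η₀ < essInf (fun x => ‖x - T₀ x‖) μ := hη₀
    have hb : Filter.IsBoundedUnder (· ≥ ·) (ae μ) (fun x => ‖x - T₀ x‖) :=
      ⟨0, Filter.eventually_map.mpr (Filter.Eventually.of_forall fun x => norm_nonneg _)⟩
    exact ae_lt_of_lt_essInf hη₀' hb
  have hdiffae : ∀ᵐ x ∂μ, DifferentiableAt ℝ u₀ x := hac.ae_le hu₀lip.ae_differentiableAt
  have hkey : ∀ᵐ x ∂μ, u₀ (f₀ x) = u₀ x - η₀ ∧ ‖f₀ x - T₀ x‖ = ‖x - T₀ x‖ - η₀ := by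
    filter_upwards [hAE, hdist, hdiffae] with x h1 h2 h3
    set r := ‖x - T₀ x‖ with hrdef
    have hrpos : 0 < r := lt_trans hη₀pos h2
    have hne : x ≠ T₀ x := by
      intro h
      rw [hrdef] at hrpos
      rw [← h] at hrpos
      simp at hrpos
    have hgrad := grad_eq hu₀lip h1 hne h3
    have ht0 : 0 ≤ η₀ / r := div_nonneg hη₀pos.le hrpos.le
    have ht1 : η₀ / r ≤ 1 := by rw [div_le_one hrpos]; exact h2.le
    have hfx : f₀ x = x + (η₀ / r) • (T₀ x - x) := by
      rw [hf₀ x h3, hgrad, ← hrdef, div_eq_mul_inv]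
      module
    constructor
    · rw [hfx, seg_eq hu₀lip h1 ht0 ht1, ← hrdef, div_mul_cancel₀ _ (ne_of_gt hrpos)]
    · rw [hfx, show x + (η₀ / r) • (T₀ x - x) - T₀ x = (1 - η₀ / r) • (x - T₀ x) by module,
        norm_smul, Real.norm_eq_abs, abs_of_nonneg (by linarith), ← hrdef]
      field_simp
  have hub : ∀ r ∈ {r : ℝ | ∃ u : Euc d → ℝ, LipschitzWith 1 u ∧
      r = (∫ x, u x ∂(Measure.map f₀ μ)) - ∫ y, u y ∂ν}, r ≤ W1 μ ν - η₀ := by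
    rintro r ⟨u, hu, rfl⟩
    obtain ⟨I1, I2, I3⟩ := hInt u hu
    have I32 : Integrable (fun x => u (f₀ x) - u (T₀ x)) μ := I3.sub I2
    have Inc : Integrable (fun x => ‖x - T₀ x‖ - η₀) μ := hnormInt.sub (integrable_const η₀)
    rw [hμ'int u hu, hνint u hu, ← integral_sub I3 I2]
    have hle : (∫ x, (u (f₀ x) - u (T₀ x)) ∂μ) ≤ ∫ x, (‖x - T₀ x‖ - η₀) ∂μ := by
      apply integral_mono_ae I32 Inc
      filter_upwards [hkey] with x hx
      calc u (f₀ x) - u (T₀ x) ≤ ‖f₀ x - T₀ x‖ := lip_sub_le hu _ _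
        _ = ‖x - T₀ x‖ - η₀ := hx.2
    have heq2 : (∫ x, (‖x - T₀ x‖ - η₀) ∂μ) = W1 μ ν - η₀ := by
      rw [integral_sub hnormInt (integrable_const η₀), hT₀eq, integral_const]
      simp
    linarith
  have hmem : W1 μ ν - η₀ ∈ {r : ℝ | ∃ u : Euc d → ℝ, LipschitzWith 1 u ∧
      r = (∫ x, u x ∂(Measure.map f₀ μ)) - ∫ y, u y ∂ν} := by
    refine ⟨u₀, hu₀lip, ?_⟩
    obtain ⟨I1, I2, I3⟩ := hInt u₀ hu₀lip
    rw [hμ'int u₀ hu₀lip]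
    have hcon : (∫ x, u₀ (f₀ x) ∂μ) = (∫ x, u₀ x ∂μ) - η₀ := by
      rw [integral_congr_ae (g := fun x => u₀ x - η₀) (hkey.mono fun x hx => hx.1),
        integral_sub I1 (integrable_const η₀), integral_const]
      simp
    rw [hcon]
    linarith
  exact IsGreatest.csSup_eq ⟨hmem, hub⟩
end
end

section
/- Let μ ≪ Lebesgue, T₀ an optimal map for (μ,ν) with ℓ₀(T₀) > 0, and let u₀, ũ₀ be two Kantorovich potentials for the pair (μ,ν). Then ∇u₀(x) = ∇ũ₀(x) for μ-almost every x. -/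
open MeasureTheory

noncomputable section

-- Equality case of Cauchy-Schwarz
lemma aux_cs {d : ℕ} (g w : Euc d) (hw : w ≠ 0) (hg : ‖g‖ ≤ 1)
    (h : inner ℝ g w = ‖w‖) : g = ‖w‖⁻¹ • w := by
  have hw0 : (0:ℝ) < ‖w‖ := norm_pos_iff.mpr hw
  have key : ‖g - ‖w‖⁻¹ • w‖ ^ 2 ≤ 0 := by
    rw [norm_sub_sq_real, real_inner_smul_right, h, norm_smul]
    have : ‖(‖w‖⁻¹ : ℝ)‖ = ‖w‖⁻¹ := by
      rw [Real.norm_eq_abs, abs_of_pos (inv_pos.mpr hw0)]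
    rw [this]
    have h1 : ‖w‖⁻¹ * ‖w‖ = 1 := inv_mul_cancel₀ hw0.ne'
    have h2 : (‖w‖⁻¹ * ‖w‖) ^ 2 = 1 := by rw [h1]; ring
    nlinarith [norm_nonneg g]
  have : ‖g - ‖w‖⁻¹ • w‖ = 0 := by nlinarith [norm_nonneg (g - ‖w‖⁻¹ • w)]
  exact sub_eq_zero.mp (norm_eq_zero.mp this)

lemma aux_grad {d : ℕ} (u : Euc d → ℝ) (hu : LipschitzWith 1 u) (x y : Euc d)
    (hxy : x ≠ y) (heq : u x - u y = ‖x - y‖) (hd : DifferentiableAt ℝ u x) :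
    gradient u x = ‖x - y‖⁻¹ • (x - y) := by
  have hv : True := trivial
  -- on the segment, u is affine
  have seg : ∀ t ∈ Set.Icc (0:ℝ) 1, u (x + t • (y - x)) = u x - t * ‖x - y‖ := by
    intro t ht
    have h1 : u x - u (x + t • (y - x)) ≤ t * ‖x - y‖ := by
      have := hu.dist_le_mul x (x + t • (y - x))
      rw [Real.dist_eq] at this
      have hn : dist x (x + t • (y - x)) = t * ‖x - y‖ := by
        rw [dist_eq_norm]
        have he : x - (x + t • (y - x)) = t • (x - y) := by module
        rw [he, norm_smul, Real.norm_eq_abs, abs_of_nonneg ht.1]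
      calc u x - u (x + t • (y - x)) ≤ |u x - u (x + t • (y - x))| := le_abs_self _
        _ ≤ dist x (x + t • (y - x)) := by simpa using this
        _ = t * ‖x - y‖ := hn
    have h2 : u (x + t • (y - x)) - u y ≤ (1 - t) * ‖x - y‖ := by
      have := hu.dist_le_mul (x + t • (y - x)) y
      rw [Real.dist_eq] at this
      have hn : dist (x + t • (y - x)) y = (1 - t) * ‖x - y‖ := by
        rw [dist_eq_norm]
        have he : x + t • (y - x) - y = (1 - t) • (x - y) := by module
        rw [he, norm_smul, Real.norm_eq_abs, abs_of_nonneg (by linarith [ht.2] : (0:ℝ) ≤ 1 - t)]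
      calc u (x + t • (y - x)) - u y ≤ |u (x + t • (y - x)) - u y| := le_abs_self _
        _ ≤ dist (x + t • (y - x)) y := by simpa using this
        _ = (1 - t) * ‖x - y‖ := hn
    linarith
  -- derivative of t ↦ u (x + t • (y - x)) at 0
  have h1 : HasDerivAt (fun t : ℝ => x + t • (y - x)) (y - x) 0 := by
    simpa using ((hasDerivAt_id (0:ℝ)).smul_const (y - x)).const_add x
  have h2 : HasDerivAt (fun t : ℝ => u (x + t • (y - x))) (fderiv ℝ u x (y - x)) 0 := by
    have hx0 : x + (0:ℝ) • (y - x) = x := by simp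
    have hd' : HasFDerivAt u (fderiv ℝ u x) ((fun t : ℝ => x + t • (y - x)) 0) := by
      simpa [hx0] using hd.hasFDerivAt
    exact hd'.comp_hasDerivAt 0 h1
  have h3 : HasDerivWithinAt (fun t : ℝ => u (x + t • (y - x))) (-‖x - y‖) (Set.Ici 0) 0 := by
    have haff : HasDerivWithinAt (fun t : ℝ => u x - t * ‖x - y‖) (-‖x - y‖) (Set.Ici 0) 0 := by
      have : HasDerivAt (fun t : ℝ => u x - t * ‖x - y‖) (-(1 * ‖x - y‖)) 0 :=
        ((hasDerivAt_id (0:ℝ)).mul_const _).const_sub _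
      simpa using this.hasDerivWithinAt
    refine haff.congr_of_eventuallyEq ?_ (by simp)
    have hmem : Set.Icc (0:ℝ) 1 ∈ nhdsWithin 0 (Set.Ici 0) :=
      Icc_mem_nhdsGE_of_mem (by constructor <;> norm_num)
    filter_upwards [hmem] with t ht
    exact seg t ht
  have huniq : fderiv ℝ u x (y - x) = -‖x - y‖ :=
    (uniqueDiffOn_Ici (0:ℝ) 0 Set.self_mem_Ici).eq_deriv _ h2.hasDerivWithinAt h3
  -- translate to gradient
  have hinner : (inner ℝ (gradient u x) (x - y) : ℝ) = ‖x - y‖ := by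
    have hgv : (inner ℝ (gradient u x) (y - x) : ℝ) = fderiv ℝ u x (y - x) := by
      simp [gradient, InnerProductSpace.toDual_apply_apply]
    have hh : (inner ℝ (gradient u x) (x - y) : ℝ) = -(inner ℝ (gradient u x) (y - x) : ℝ) := by
      have he : x - y = -(y - x) := by module
      rw [he, inner_neg_right]
    rw [hh, hgv, huniq]; ring
  have hnorm : ‖gradient u x‖ ≤ 1 := by
    have := norm_fderiv_le_of_lipschitz ℝ hu (x₀ := x)
    have heq2 : ‖gradient u x‖ = ‖fderiv ℝ u x‖ := by
      rw [gradient]; exact LinearIsometryEquiv.norm_map _ _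
    rw [heq2]; simpa using this
  exact aux_cs _ _ (sub_ne_zero.mpr hxy) hnorm hinner

lemma aux_transport {d : ℕ} (Ω : Set (Euc d)) (hΩc : IsCompact Ω)
    (μ ν : Measure (Euc d)) [IsProbabilityMeasure μ] [IsProbabilityMeasure ν]
    (hμΩ : μ Ωᶜ = 0) (hνΩ : ν Ωᶜ = 0)
    (T : Euc d → Euc d) (hT : IsOptimalMap T μ ν)
    (u : Euc d → ℝ) (hu : IsKantorovichPotential u μ ν) :
    ∀ᵐ x ∂μ, u x - u (T x) = ‖x - T x‖ := by
  have hTm : AEMeasurable T μ := by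
    by_contra h
    have := Measure.map_of_not_aemeasurable h
    rw [hT.1] at this
    exact (IsProbabilityMeasure.ne_zero ν) this
  obtain ⟨R, hR⟩ : ∃ R, Ω ⊆ Metric.closedBall 0 R := hΩc.isBounded.subset_closedBall 0
  have haeΩ : ∀ᵐ x ∂μ, x ∈ Ω := by
    rw [MeasureTheory.ae_iff]
    exact hμΩ
  have haeTΩ : ∀ᵐ x ∂μ, T x ∈ Ω := by
    rw [MeasureTheory.ae_iff]
    have hmeas : MeasurableSet Ωᶜ := hΩc.isClosed.measurableSet.compl
    have : μ (T ⁻¹' Ωᶜ) = ν Ωᶜ := by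
      rw [← hT.1, Measure.map_apply_of_aemeasurable hTm hmeas]
    exact this.trans hνΩ
  have hbound : ∀ z ∈ Ω, |u z| ≤ |u 0| + R := by
    intro z hz
    have h1 : |u z - u 0| ≤ ‖z‖ := by
      have := hu.1.dist_le_mul z 0
      rw [Real.dist_eq, dist_zero_right] at this
      simpa using this
    have h2 : ‖z‖ ≤ R := by simpa [Metric.mem_closedBall, dist_zero_right] using hR hz
    calc |u z| = |u 0 + (u z - u 0)| := by ring_nf
      _ ≤ |u 0| + |u z - u 0| := abs_add_le _ _
      _ ≤ |u 0| + R := by linarith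
  have hiu : Integrable (fun x => u x) μ := by
    refine ⟨hu.1.continuous.aestronglyMeasurable, HasFiniteIntegral.of_bounded (C := |u 0| + R) ?_⟩
    filter_upwards [haeΩ] with x hx
    simpa using hbound x hx
  have hiuT : Integrable (fun x => u (T x)) μ := by
    refine ⟨(hu.1.continuous.measurable.comp_aemeasurable hTm).aestronglyMeasurable,
      HasFiniteIntegral.of_bounded (C := |u 0| + R) ?_⟩
    filter_upwards [haeTΩ] with x hx
    simpa using hbound (T x) hx
  have hin : Integrable (fun x => ‖x - T x‖) μ := by
    refine ⟨(aemeasurable_id.sub hTm).norm.aestronglyMeasurable,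
      HasFiniteIntegral.of_bounded (C := R + R) ?_⟩
    filter_upwards [haeΩ, haeTΩ] with x hx hTx
    have h1 : ‖x‖ ≤ R := by simpa [dist_zero_right] using hR hx
    have h2 : ‖T x‖ ≤ R := by simpa [dist_zero_right] using hR hTx
    have : ‖x - T x‖ ≤ ‖x‖ + ‖T x‖ := norm_sub_le _ _
    simp only [norm_norm]
    linarith
  have hmapint : ∫ x, u (T x) ∂μ = ∫ y, u y ∂ν := by
    rw [← hT.1, integral_map hTm hu.1.continuous.aestronglyMeasurable]
  set f : Euc d → ℝ := fun x => ‖x - T x‖ - (u x - u (T x)) with hf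
  have hiu2 : Integrable (fun x => u x - u (T x)) μ := hiu.sub hiuT
  have hif : Integrable f μ := hin.sub hiu2
  have hfnonneg : 0 ≤ f := by
    intro x
    have := hu.1.dist_le_mul x (T x)
    rw [Real.dist_eq, dist_eq_norm] at this
    have h1 : u x - u (T x) ≤ ‖x - T x‖ := le_trans (le_abs_self _) (by simpa using this)
    simp [hf]; linarith
  have hintf : ∫ x, f x ∂μ = 0 := by
    rw [hf]
    rw [integral_sub hin hiu2, integral_sub hiu hiuT, hmapint]
    rw [hT.2, hu.2]
    ring
  have := (integral_eq_zero_iff_of_nonneg hfnonneg hif).mp hintf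
  filter_upwards [this] with x hx
  have : f x = 0 := hx
  simp only [hf] at this
  linarith

/-- if `ℓ₀(T₀) > 0` then any two Kantorovich potentials for `(μ, ν)` have
equal gradients μ-almost everywhere. -/
theorem gradients_of_potentials_agree {d : ℕ} (Ω : Set (Euc d))
    (hΩc : IsCompact Ω) (hΩconv : Convex ℝ Ω)
    (μ ν : Measure (Euc d)) [IsProbabilityMeasure μ] [IsProbabilityMeasure ν]
    (hμΩ : μ Ωᶜ = 0) (hνΩ : ν Ωᶜ = 0) (hac : μ ≪ volume)
    (T₀ : Euc d → Euc d) (hT₀ : IsOptimalMap T₀ μ ν) (hℓ : 0 < ell0 T₀ μ)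
    (u₀ v₀ : Euc d → ℝ)
    (hu₀ : IsKantorovichPotential u₀ μ ν) (hv₀ : IsKantorovichPotential v₀ μ ν) :
    ∀ᵐ x ∂μ, gradient u₀ x = gradient v₀ x := by
  have hposae : ∀ᵐ x ∂μ, 0 < ‖x - T₀ x‖ := by
    refine ae_lt_of_lt_essInf hℓ ?_
    exact Filter.isBoundedUnder_of ⟨0, fun x => norm_nonneg _⟩
  have hdu : ∀ᵐ x ∂μ, DifferentiableAt ℝ u₀ x := hac.ae_le hu₀.1.ae_differentiableAt
  have hdv : ∀ᵐ x ∂μ, DifferentiableAt ℝ v₀ x := hac.ae_le hv₀.1.ae_differentiableAt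
  have htu := aux_transport Ω hΩc μ ν hμΩ hνΩ T₀ hT₀ u₀ hu₀
  have htv := aux_transport Ω hΩc μ ν hμΩ hνΩ T₀ hT₀ v₀ hv₀
  filter_upwards [hposae, hdu, hdv, htu, htv] with x hpos hdux hdvx hux hvx
  have hne : x ≠ T₀ x := by
    intro h
    rw [← h] at hpos
    simp at hpos
  rw [aux_grad u₀ hu₀.1 x (T₀ x) hne hux hdux,
    aux_grad v₀ hv₀.1 x (T₀ x) hne hvx hdvx]
end
end

section
/- Fix θ ∈ (0,1). Define μ₀ = μ, η_n = θ·W₁(μ_n, ν), and μ_{n+1} = (f_n)_#μ_n where f_n(x) = x − η_n∇u_n(x) (a.e., with u_n a Kantorovich potential for (μ_n, ν)). Let T₀ be an optimal map for (μ,ν) and N(θ) = ⌈log_{1−θ}(1 − ℓ₀(T₀)/W₁(μ,ν))⌉ − 1. Then for all 0 ≤ n ≤ N(θ), W₁(μ_n, ν) = (1−θ)^n · W₁(μ, ν). -/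
open MeasureTheory
open scoped RealInnerProductSpace

noncomputable section

/-- A 1-Lipschitz function achieving slope 1 between `a` and `b` is affine on the segment. -/
lemma ttc_ray_linear {d : ℕ} {u : Euc d → ℝ} (hu : LipschitzWith 1 u) {a b : Euc d}
    (hab : u a - u b = ‖a - b‖) {t : ℝ} (ht0 : 0 ≤ t) (ht1 : t ≤ 1) :
    u a - u (a + t • (b - a)) = t * ‖a - b‖ ∧
      u (a + t • (b - a)) - u b = (1 - t) * ‖a - b‖ := by
  set c := a + t • (b - a) with hc
  have hac : ‖a - c‖ = t * ‖a - b‖ := by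
    have : a - c = t • (a - b) := by rw [hc]; module
    rw [this, norm_smul, Real.norm_eq_abs, abs_of_nonneg ht0]
  have hcb : ‖c - b‖ = (1 - t) * ‖a - b‖ := by
    have : c - b = (1 - t) • (a - b) := by rw [hc]; module
    rw [this, norm_smul, Real.norm_eq_abs, abs_of_nonneg (by linarith)]
  have h1 : |u a - u c| ≤ t * ‖a - b‖ := by
    have := hu.dist_le_mul a c
    rw [Real.dist_eq, dist_eq_norm] at this
    simpa [hac] using this
  have h2 : |u c - u b| ≤ (1 - t) * ‖a - b‖ := by
    have := hu.dist_le_mul c b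
    rw [Real.dist_eq, dist_eq_norm] at this
    simpa [hcb] using this
  rw [abs_le] at h1 h2
  constructor <;> linarith [h1.1, h1.2, h2.1, h2.2]

/-- Endpoint gradient lemma: if `u` is 1-Lipschitz with `u a - u b = ‖a - b‖` and `u` is
differentiable at `a`, then its gradient at `a` is the unit vector from `b` to `a`. -/
lemma ttc_gradient_at_ray_start {d : ℕ} {u : Euc d → ℝ} (hu : LipschitzWith 1 u) {a b : Euc d}
    (hne : a ≠ b) (hab : u a - u b = ‖a - b‖) (hd : DifferentiableAt ℝ u a) :
    gradient u a = ‖a - b‖⁻¹ • (a - b) := by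
  have hL : (0:ℝ) < ‖a - b‖ := by
    rw [norm_pos_iff]; exact sub_ne_zero.2 hne
  -- derivative of u along the segment
  have hline : HasDerivAt (fun t : ℝ => a + t • (b - a)) (b - a) 0 := by
    simpa using (((hasDerivAt_id (0:ℝ)).smul_const (b - a)).const_add a)
  have hpt : a + (0:ℝ) • (b - a) = a := by simp
  have hφ : HasDerivAt (fun t : ℝ => u (a + t • (b - a))) (fderiv ℝ u a (b - a)) 0 := by
    have := (hpt ▸ hd.hasFDerivAt).comp_hasDerivAt 0 hline
    simpa [Function.comp_def] using this
  have hψ : HasDerivWithinAt (fun t : ℝ => u a - t * ‖a - b‖) (-‖a - b‖) (Set.Icc 0 1) 0 := by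
    simpa using (((hasDerivAt_id (0:ℝ)).mul_const (‖a - b‖)).const_sub (u a)).hasDerivWithinAt
  have hφ' : HasDerivWithinAt (fun t : ℝ => u (a + t • (b - a))) (-‖a - b‖) (Set.Icc 0 1) 0 := by
    refine hψ.congr (fun t ht => ?_) (by simp)
    have := (ttc_ray_linear hu hab ht.1 ht.2).1
    linarith
  have huniq : UniqueDiffWithinAt ℝ (Set.Icc (0:ℝ) 1) 0 :=
    (uniqueDiffOn_Icc zero_lt_one) 0 (by constructor <;> norm_num)
  have hder : fderiv ℝ u a (b - a) = -‖a - b‖ :=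
    huniq.eq_deriv _ hφ.hasDerivWithinAt hφ'
  -- gradient facts
  have hdual : (InnerProductSpace.toDual ℝ (Euc d)) (gradient u a) = fderiv ℝ u a :=
    hd.hasGradientAt.hasFDerivAt.unique hd.hasFDerivAt
  have hgin : ∀ y : Euc d, ⟪gradient u a, y⟫ = fderiv ℝ u a y := by
    intro y
    rw [← hdual, InnerProductSpace.toDual_apply_apply]
  have hgnorm : ‖gradient u a‖ ≤ 1 := by
    have h1 : ‖fderiv ℝ u a‖ ≤ ((1:NNReal):ℝ) :=
      hd.hasFDerivAt.le_of_lipschitzOn Filter.univ_mem (hu.lipschitzOnWith (s := Set.univ))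
    rw [← hdual] at h1
    simpa only [LinearIsometryEquiv.norm_map, NNReal.coe_one] using h1
  set g := gradient u a with hg
  set w : Euc d := ‖a - b‖⁻¹ • (a - b) with hw
  have hwnorm : ‖w‖ = 1 := by
    rw [hw, norm_smul, Real.norm_eq_abs, abs_of_nonneg (inv_nonneg.2 hL.le),
      inv_mul_cancel₀ hL.ne']
  have hgw : ⟪g, w⟫ = 1 := by
    rw [hw, real_inner_smul_right]
    have : ⟪g, a - b⟫ = ‖a - b‖ := by
      have h1 : ⟪g, b - a⟫ = -‖a - b‖ := by rw [hg, hgin]; exact hder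
      have h2 : (b - a) = -(a - b) := by abel
      rw [h2, inner_neg_right] at h1
      linarith
    rw [this, inv_mul_cancel₀ hL.ne']
  have hle : ‖g - w‖ ^ 2 ≤ 0 := by
    have hx := norm_sub_sq_real g w
    have hg2 : ‖g‖ ^ 2 ≤ 1 := by nlinarith [norm_nonneg g]
    rw [hwnorm] at hx
    nlinarith
  have hz : g - w = 0 := by
    have h0 := le_antisymm hle (by positivity)
    rwa [pow_eq_zero_iff (by norm_num), norm_eq_zero] at h0
  exact sub_eq_zero.1 hz

/-- Evans–Gangbo style estimate: directions of transport rays are Lipschitz on points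
with two-sided margin `δ`. -/
lemma ttc_dir_lipschitz {d : ℕ} {u : Euc d → ℝ} (hu : LipschitzWith 1 u)
    {y₁ y₂ e₁ e₂ : Euc d} {δ : ℝ} (hδ : 0 < δ) (he₁ : ‖e₁‖ = 1) (he₂ : ‖e₂‖ = 1)
    (h1p : u (y₁ + δ • e₁) = u y₁ - δ) (h1m : u (y₁ - δ • e₁) = u y₁ + δ)
    (h2p : u (y₂ + δ • e₂) = u y₂ - δ) (h2m : u (y₂ - δ • e₂) = u y₂ + δ) :
    δ * ‖e₁ - e₂‖ ≤ ‖y₁ - y₂‖ := by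
  have hA : |u (y₁ + δ • e₁) - u (y₂ - δ • e₂)| ≤ ‖(y₁ - y₂) + δ • (e₁ + e₂)‖ := by
    have := hu.dist_le_mul (y₁ + δ • e₁) (y₂ - δ • e₂)
    rw [Real.dist_eq, dist_eq_norm] at this
    have heq : (y₁ + δ • e₁) - (y₂ - δ • e₂) = (y₁ - y₂) + δ • (e₁ + e₂) := by module
    rw [heq] at this; simpa using this
  have hB : |u (y₁ - δ • e₁) - u (y₂ + δ • e₂)| ≤ ‖(y₁ - y₂) - δ • (e₁ + e₂)‖ := by
    have := hu.dist_le_mul (y₁ - δ • e₁) (y₂ + δ • e₂)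
    rw [Real.dist_eq, dist_eq_norm] at this
    have heq : (y₁ - δ • e₁) - (y₂ + δ • e₂) = (y₁ - y₂) - δ • (e₁ + e₂) := by module
    rw [heq] at this; simpa using this
  rw [h1p, h2m] at hA
  rw [h1m, h2p] at hB
  set c := u y₁ - u y₂ with hc
  have hA' : (c - 2*δ)^2 ≤ ‖(y₁ - y₂) + δ • (e₁ + e₂)‖^2 := by
    have h1 : |c - 2*δ| ≤ ‖(y₁ - y₂) + δ • (e₁ + e₂)‖ := by
      have : u y₁ - δ - (u y₂ + δ) = c - 2*δ := by rw [hc]; ring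
      rwa [this] at hA
    calc (c - 2*δ)^2 = |c - 2*δ|^2 := (sq_abs _).symm
    _ ≤ _ := by apply pow_le_pow_left₀ (abs_nonneg _) h1
  have hB' : (c + 2*δ)^2 ≤ ‖(y₁ - y₂) - δ • (e₁ + e₂)‖^2 := by
    have h1 : |c + 2*δ| ≤ ‖(y₁ - y₂) - δ • (e₁ + e₂)‖ := by
      have : u y₁ + δ - (u y₂ - δ) = c + 2*δ := by rw [hc]; ring
      rwa [this] at hB
    calc (c + 2*δ)^2 = |c + 2*δ|^2 := (sq_abs _).symm
    _ ≤ _ := by apply pow_le_pow_left₀ (abs_nonneg _) h1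
  have hexp1 : ‖(y₁ - y₂) + δ • (e₁ + e₂)‖^2
      = ‖y₁ - y₂‖^2 + 2 * (δ * ⟪y₁ - y₂, e₁ + e₂⟫) + δ^2 * ‖e₁ + e₂‖^2 := by
    rw [norm_add_sq_real, real_inner_smul_right, norm_smul, Real.norm_eq_abs,
      abs_of_nonneg hδ.le, mul_pow]
  have hexp2 : ‖(y₁ - y₂) - δ • (e₁ + e₂)‖^2
      = ‖y₁ - y₂‖^2 - 2 * (δ * ⟪y₁ - y₂, e₁ + e₂⟫) + δ^2 * ‖e₁ + e₂‖^2 := by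
    rw [norm_sub_sq_real, real_inner_smul_right, norm_smul, Real.norm_eq_abs,
      abs_of_nonneg hδ.le, mul_pow]
  have hpar : ‖e₁ + e₂‖^2 + ‖e₁ - e₂‖^2 = 4 := by
    rw [norm_add_sq_real, norm_sub_sq_real, he₁, he₂]; ring
  have hsq : (δ * ‖e₁ - e₂‖)^2 ≤ ‖y₁ - y₂‖^2 := by nlinarith [hA', hB', sq_nonneg c]
  have h1 : 0 ≤ δ * ‖e₁ - e₂‖ := by positivity
  nlinarith [hsq, norm_nonneg (y₁ - y₂)]


/-- Pointwise segment geometry along a transport ray. -/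
lemma ttc_seg {d : ℕ} {u : Euc d → ℝ} (hu : LipschitzWith 1 u) {x b eu : Euc d} {t : ℝ}
    (hL : 0 < ‖x - b‖) (he : eu = ‖b - x‖⁻¹ • (b - x)) (hb : u x - u b = ‖x - b‖)
    (ht0 : 0 ≤ t) (ht1 : t ≤ ‖x - b‖) :
    ‖eu‖ = 1 ∧ (x + t • eu) - b = -((‖x - b‖ - t) • eu)
      ∧ ‖(x + t • eu) - b‖ = ‖x - b‖ - t ∧ u (x + t • eu) = u x - t
      ∧ x + t • eu = (1 - t/‖x - b‖) • x + (t/‖x - b‖) • b := by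
  have hnorm : ‖b - x‖ = ‖x - b‖ := norm_sub_rev _ _
  have h1 : ‖eu‖ = 1 := by
    rw [he, norm_smul, Real.norm_eq_abs, hnorm, abs_of_nonneg (inv_nonneg.2 hL.le),
      inv_mul_cancel₀ hL.ne']
  have h2 : ‖x - b‖ • eu = b - x := by
    rw [he, smul_smul, hnorm, mul_inv_cancel₀ hL.ne', one_smul]
  have h3 : (x + t • eu) - b = -((‖x - b‖ - t) • eu) := by
    rw [sub_smul, neg_sub, h2]; module
  have h4 : ‖(x + t • eu) - b‖ = ‖x - b‖ - t := by
    rw [h3, norm_neg, norm_smul, Real.norm_eq_abs, h1, mul_one, abs_of_nonneg (by linarith)]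
  have hteu : t • eu = (t / ‖x - b‖) • (b - x) := by
    rw [he, smul_smul, div_eq_mul_inv, hnorm]
  have h5 : u (x + t • eu) = u x - t := by
    have ht0' : 0 ≤ t / ‖x - b‖ := by positivity
    have ht1' : t / ‖x - b‖ ≤ 1 := (div_le_one hL).2 ht1
    have := (ttc_ray_linear hu hb ht0' ht1').1
    rw [← hteu] at this
    have hcanc : t / ‖x - b‖ * ‖x - b‖ = t := by field_simp
    rw [hcanc] at this
    linarith
  have h6 : x + t • eu = (1 - t/‖x - b‖) • x + (t/‖x - b‖) • b := by
    rw [hteu]; module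
  exact ⟨h1, h3, h4, h5, h6⟩



/-- The image of a Lebesgue-null set under a map that is Lipschitz on it is Lebesgue-null. -/
lemma ttc_volume_image_null {d : ℕ} {K : NNReal} {f : Euc d → Euc d} {s : Set (Euc d)}
    (hf : LipschitzOnWith K f s) (hs : volume s = 0) : volume (f '' s) = 0 := by
  haveI hH : (μH[(d:ℝ)] : Measure (Euc d)).IsAddHaarMeasure := by
    have h := isAddHaarMeasure_hausdorffMeasure (E := Euc d)
    rwa [finrank_euclideanSpace_fin] at h
  -- volume = c • μH[d] and μH[d] = c' • volume
  have h1 : (volume : Measure (Euc d))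
      = (volume : Measure (Euc d)).addHaarScalarFactor (μH[(d:ℝ)]) • (μH[(d:ℝ)] : Measure (Euc d)) :=
    Measure.isAddLeftInvariant_eq_smul _ _
  have h2 : (μH[(d:ℝ)] : Measure (Euc d))
      = (μH[(d:ℝ)] : Measure (Euc d)).addHaarScalarFactor volume • (volume : Measure (Euc d)) :=
    Measure.isAddLeftInvariant_eq_smul _ _
  have hsH : (μH[(d:ℝ)] : Measure (Euc d)) s = 0 := by
    rw [h2]
    simp [hs]
  have himH : (μH[(d:ℝ)] : Measure (Euc d)) (f '' s) = 0 := by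
    have := hf.hausdorffMeasure_image_le (d := (d:ℝ)) (Nat.cast_nonneg d)
    rw [hsH, mul_zero] at this
    exact le_antisymm this bot_le
  rw [h1]
  simp [himH]

/-- a.e. essInf lower bound, for nonnegative real functions. -/
lemma ttc_ae_essInf_le {α : Type*} [MeasurableSpace α] {μ : Measure α} [IsProbabilityMeasure μ]
    {f : α → ℝ} (h0 : ∀ x, 0 ≤ f x) : ∀ᵐ x ∂μ, essInf f μ ≤ f x := by
  have hbdd : Filter.IsBoundedUnder (· ≥ ·) (ae μ) f :=
    Filter.isBoundedUnder_of ⟨0, fun x => h0 x⟩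
  have key : ∀ n : ℕ, ∀ᵐ x ∂μ, essInf f μ - ((n:ℝ)+1)⁻¹ < f x := by
    intro n
    refine Filter.eventually_lt_of_lt_liminf ?_ hbdd
    have : essInf f μ = Filter.liminf f (ae μ) := rfl
    rw [← this]
    have : (0:ℝ) < ((n:ℝ)+1)⁻¹ := by positivity
    linarith
  have := MeasureTheory.ae_all_iff.2 key
  filter_upwards [this] with x hx
  by_contra h
  push_neg at h
  obtain ⟨n, hn⟩ := exists_nat_gt (essInf f μ - f x)⁻¹
  have h1 : 0 < essInf f μ - f x := by linarith
  have h2 : ((n:ℝ)+1)⁻¹ < essInf f μ - f x := by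
    rw [inv_lt_comm₀ (by positivity) h1]
    calc (essInf f μ - f x)⁻¹ < n := hn
    _ < n + 1 := by linarith
  have := hx n
  linarith

/-- Integrability from an a.e. bound, over a finite measure. -/
lemma ttc_integrable_of_bound {α : Type*} [MeasurableSpace α] {μ : Measure α} [IsFiniteMeasure μ]
    {f : α → ℝ} {C : ℝ} (hm : AEStronglyMeasurable f μ) (h : ∀ᵐ x ∂μ, |f x| ≤ C) :
    Integrable f μ :=
  ⟨hm, MeasureTheory.HasFiniteIntegral.of_bounded (C := C) (by simpa [Real.norm_eq_abs] using h)⟩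


set_option maxHeartbeats 2000000 in
/-- geometric convergence rate of the TTC iteration up to index `N(θ)`. -/
theorem ttc_geometric_convergence {d : ℕ} (Ω : Set (Euc d))
    (hΩc : IsCompact Ω) (hΩconv : Convex ℝ Ω)
    (μ ν : Measure (Euc d)) [IsProbabilityMeasure μ] [IsProbabilityMeasure ν]
    (hμΩ : μ Ωᶜ = 0) (hνΩ : ν Ωᶜ = 0) (hac : μ ≪ volume)
    (θ : ℝ) (hθ : θ ∈ Set.Ioo (0:ℝ) 1)
    (T₀ : Euc d → Euc d) (hT₀ : IsOptimalMap T₀ μ ν)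
    (hℓpos : 0 < ell0 T₀ μ) (hℓlt : ell0 T₀ μ < W1 μ ν)
    (μseq : ℕ → Measure (Euc d)) (useq : ℕ → Euc d → ℝ) (η : ℕ → ℝ)
    (fseq : ℕ → Euc d → Euc d)
    (hμ0 : μseq 0 = μ)
    (hpot : ∀ n, IsKantorovichPotential (useq n) (μseq n) ν)
    (hη : ∀ n, η n = θ * W1 (μseq n) ν)
    (hfm : ∀ n, Measurable (fseq n))
    (hf : ∀ n x, DifferentiableAt ℝ (useq n) x →
      fseq n x = x - η n • gradient (useq n) x)
    (hf' : ∀ n x, ¬ DifferentiableAt ℝ (useq n) x → fseq n x = x)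
    (hiter : ∀ n, μseq (n + 1) = Measure.map (fseq n) (μseq n))
    (N : ℤ) (hN : N = ⌈Real.logb (1 - θ) (1 - ell0 T₀ μ / W1 μ ν)⌉ - 1) :
    ∀ n : ℕ, (n : ℤ) ≤ N → W1 (μseq n) ν = (1 - θ) ^ n * W1 μ ν := by
  obtain ⟨hθ0, hθ1⟩ := hθ
  obtain ⟨hT₀map, hT₀cost⟩ := hT₀
  set W := W1 μ ν with hWdef
  set ℓ := ell0 T₀ μ with hldef
  have hWpos : 0 < W := lt_trans hℓpos hℓlt
  have hu0lip : LipschitzWith 1 (useq 0) := (hpot 0).1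
  have hpot0 : (∫ x, useq 0 x ∂μ) - ∫ y, useq 0 y ∂ν = W := by
    have := (hpot 0).2
    rwa [hμ0] at this
  -- T₀ is a.e. measurable
  have hT₀ae : AEMeasurable T₀ μ := by
    by_contra h
    have h0 := Measure.map_of_not_aemeasurable (μ := μ) h
    rw [hT₀map] at h0
    exact (IsProbabilityMeasure.ne_zero ν) h0
  set L : Euc d → ℝ := fun x => ‖x - T₀ x‖ with hLdef
  set e : Euc d → Euc d := fun x => ‖T₀ x - x‖⁻¹ • (T₀ x - x) with hedef
  set s : ℕ → ℝ := fun n => (1 - (1 - θ)^n) * W with hsdef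
  -- basic measurability
  have he_meas : AEMeasurable e μ := by
    have hsub : AEMeasurable (fun x => T₀ x - x) μ := hT₀ae.sub aemeasurable_id
    have hnsm : Measurable (fun v : Euc d => ‖v‖⁻¹ • v) :=
      (measurable_norm.inv).smul measurable_id
    exact hnsm.comp_aemeasurable hsub
  have hG_meas : ∀ t : ℝ, AEMeasurable (fun x => x + t • e x) μ :=
    fun t => aemeasurable_id.add (he_meas.const_smul t)
  have hL_meas : AEMeasurable L μ := (aemeasurable_id.sub hT₀ae).norm
  -- boundedness of Ω
  obtain ⟨C, hC⟩ : ∃ C : ℝ, ∀ z ∈ Ω, ‖z‖ ≤ C := by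
    obtain ⟨r, hr⟩ := hΩc.isBounded.subset_closedBall 0
    exact ⟨r, fun z hz => mem_closedBall_zero_iff.1 (hr hz)⟩
  -- a.e. membership facts
  have hxΩ : ∀ᵐ x ∂μ, x ∈ Ω := by
    rw [MeasureTheory.ae_iff]
    exact hμΩ
  have hTΩ : ∀ᵐ x ∂μ, T₀ x ∈ Ω := by
    have h0 : μ (T₀ ⁻¹' Ωᶜ) = 0 := by
      rw [← Measure.map_apply_of_aemeasurable hT₀ae hΩc.isClosed.measurableSet.compl, hT₀map]
      exact hνΩ
    rw [MeasureTheory.ae_iff]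
    exact h0
  have hlL : ∀ᵐ x ∂μ, ℓ ≤ L x := ttc_ae_essInf_le (fun x => norm_nonneg _)
  -- integrability of 1-Lipschitz compositions
  have hint : ∀ (v : Euc d → ℝ), LipschitzWith 1 v → ∀ (g : Euc d → Euc d),
      AEMeasurable g μ → (∀ᵐ x ∂μ, g x ∈ Ω) → Integrable (fun x => v (g x)) μ := by
    intro v hv g hg hgΩ
    refine ttc_integrable_of_bound (C := |v 0| + C)
      ((hv.continuous.measurable.comp_aemeasurable hg).aestronglyMeasurable) ?_
    filter_upwards [hgΩ] with x hx
    have h1 := hv.dist_le_mul (g x) 0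
    rw [Real.dist_eq, dist_zero_right] at h1
    have h2 := hC _ hx
    have := abs_sub_abs_le_abs_sub (v (g x)) (v 0)
    simp only [NNReal.coe_one, one_mul] at h1
    linarith
  have hLint : Integrable L μ := by
    refine ttc_integrable_of_bound (C := 2*C) hL_meas.aestronglyMeasurable ?_
    filter_upwards [hxΩ, hTΩ] with x h1 h2
    have := norm_sub_le x (T₀ x)
    have e1 := hC _ h1
    have e2 := hC _ h2
    rw [hLdef]
    simp only [Real.norm_eq_abs]
    rw [abs_of_nonneg (norm_nonneg _)]
    linarith
  have hLW : ∫ x, L x ∂μ = W := hT₀cost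
  have hmapint : ∀ (v : Euc d → ℝ), LipschitzWith 1 v →
      ∫ y, v y ∂ν = ∫ x, v (T₀ x) ∂μ := by
    intro v hv
    rw [← hT₀map, integral_map hT₀ae hv.continuous.aestronglyMeasurable]
  -- the ray property of the initial potential
  have hu0ray : ∀ᵐ x ∂μ, useq 0 x - useq 0 (T₀ x) = L x := by
    have hiu : Integrable (fun x => useq 0 x) μ := hint _ hu0lip id aemeasurable_id hxΩ
    have hiuT : Integrable (fun x => useq 0 (T₀ x)) μ := hint _ hu0lip T₀ hT₀ae hTΩ
    have hg : ∀ᵐ x ∂μ, 0 ≤ L x - (useq 0 x - useq 0 (T₀ x)) := by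
      apply Filter.Eventually.of_forall
      intro x
      have h1 := hu0lip.dist_le_mul x (T₀ x)
      rw [Real.dist_eq, dist_eq_norm] at h1
      simp only [NNReal.coe_one, one_mul] at h1
      have h2 := le_abs_self (useq 0 x - useq 0 (T₀ x))
      have h3 : L x = ‖x - T₀ x‖ := rfl
      linarith
    have hiu2 : Integrable (fun x => useq 0 x - useq 0 (T₀ x)) μ := hiu.sub hiuT
    have hgint : Integrable (fun x => L x - (useq 0 x - useq 0 (T₀ x))) μ :=
      hLint.sub hiu2
    have hmap : ∫ y, useq 0 y ∂ν = ∫ x, useq 0 (T₀ x) ∂μ := hmapint _ hu0lip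
    have hzero : ∫ x, (L x - (useq 0 x - useq 0 (T₀ x))) ∂μ = 0 := by
      rw [integral_sub hLint hiu2, integral_sub hiu hiuT, hLW, ← hmap]
      linarith [hpot0]
    have hfin := (integral_eq_zero_iff_of_nonneg_ae hg hgint).1 hzero
    filter_upwards [hfin] with x hx
    have hx' : L x - (useq 0 x - useq 0 (T₀ x)) = 0 := hx
    linarith
  -- the combined pointwise geometric package
  have hGeom : ∀ t : ℝ, 0 ≤ t → t ≤ ℓ → ∀ᵐ x ∂μ,
      ‖e x‖ = 1 ∧ (x + t • e x) - T₀ x = -((L x - t) • e x)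
        ∧ ‖(x + t • e x) - T₀ x‖ = L x - t ∧ useq 0 (x + t • e x) = useq 0 x - t
        ∧ x + t • e x ∈ Ω := by
    intro t ht0 ht1
    filter_upwards [hxΩ, hTΩ, hlL, hu0ray] with x h1 h2 h3 h4
    have hLpos : 0 < ‖x - T₀ x‖ := lt_of_lt_of_le hℓpos h3
    have hb : useq 0 x - useq 0 (T₀ x) = ‖x - T₀ x‖ := h4
    have ht1' : t ≤ ‖x - T₀ x‖ := le_trans ht1 h3
    obtain ⟨g1, g2, g3, g4, g5⟩ := ttc_seg hu0lip (x := x) (b := T₀ x) (eu := e x)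
      hLpos rfl hb ht0 ht1'
    refine ⟨g1, g2, g3, g4, ?_⟩
    rw [g5]
    have hd0 : 0 ≤ t / ‖x - T₀ x‖ := by positivity
    have hd1 : t / ‖x - T₀ x‖ ≤ 1 := (div_le_one hLpos).2 ht1'
    exact hΩconv h1 h2 (by linarith) hd0 (by ring)
  -- value of W1 along the interpolation
  have hW1val : ∀ t : ℝ, 0 ≤ t → t ≤ ℓ →
      W1 (Measure.map (fun x => x + t • e x) μ) ν = W - t := by
    intro t ht0 ht1
    have hGae := hG_meas t
    have hGΩ : ∀ᵐ x ∂μ, x + t • e x ∈ Ω := by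
      filter_upwards [hGeom t ht0 ht1] with x hx
      exact hx.2.2.2.2
    have hRint : Integrable (fun x => L x - t) μ := hLint.sub (integrable_const t)
    have hRval : ∫ x, (L x - t) ∂μ = W - t := by
      rw [integral_sub hLint (integrable_const t), hLW, integral_const]
      simp
    have hub : ∀ r ∈ {r : ℝ | ∃ v : Euc d → ℝ, LipschitzWith 1 v ∧
        r = (∫ x, v x ∂(Measure.map (fun x => x + t • e x) μ)) - ∫ y, v y ∂ν},
        r ≤ W - t := by
      rintro r ⟨v, hv, rfl⟩
      have hvi1 : Integrable (fun x => v (x + t • e x)) μ := hint v hv _ hGae hGΩ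
      have hvi2 : Integrable (fun x => v (T₀ x)) μ := hint v hv T₀ hT₀ae hTΩ
      have hvi3 : Integrable (fun x => v (x + t • e x) - v (T₀ x)) μ := hvi1.sub hvi2
      rw [integral_map hGae hv.continuous.aestronglyMeasurable, hmapint v hv,
        ← integral_sub hvi1 hvi2]
      have hle : ∀ᵐ x ∂μ, v (x + t • e x) - v (T₀ x) ≤ L x - t := by
        filter_upwards [hGeom t ht0 ht1] with x hx
        have h1 := hv.dist_le_mul (x + t • e x) (T₀ x)
        rw [Real.dist_eq, dist_eq_norm] at h1
        simp only [NNReal.coe_one, one_mul] at h1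
        rw [hx.2.2.1] at h1
        have h2 := le_abs_self (v (x + t • e x) - v (T₀ x))
        linarith
      have hmono := integral_mono_ae hvi3 hRint hle
      linarith [hRval, hmono]
    have hval0 : (∫ x, useq 0 x ∂(Measure.map (fun x => x + t • e x) μ))
        - ∫ y, useq 0 y ∂ν = W - t := by
      have hvi1 : Integrable (fun x => useq 0 (x + t • e x)) μ := hint _ hu0lip _ hGae hGΩ
      have hvi2 : Integrable (fun x => useq 0 (T₀ x)) μ := hint _ hu0lip T₀ hT₀ae hTΩ
      rw [integral_map hGae hu0lip.continuous.aestronglyMeasurable, hmapint _ hu0lip,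
        ← integral_sub hvi1 hvi2]
      have heqa : ∀ᵐ x ∂μ, useq 0 (x + t • e x) - useq 0 (T₀ x) = L x - t := by
        filter_upwards [hGeom t ht0 ht1, hu0ray] with x hx hr
        rw [hx.2.2.2.1]
        linarith
      rw [integral_congr_ae heqa, hRval]
    apply le_antisymm
    · exact Real.sSup_le hub (by linarith)
    · rw [← hval0]
      exact le_csSup ⟨W - t, fun r hr => hub r hr⟩ ⟨useq 0, hu0lip, rfl⟩
  -- admissibility bound coming from the definition of N
  have hsN : ∀ n : ℕ, (n : ℤ) ≤ N → s n < ℓ := by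
    intro n hn
    rw [hN] at hn
    have hz : ((n:ℤ)) < ⌈Real.logb (1 - θ) (1 - ℓ / W)⌉ := by omega
    have hz' : (n : ℝ) < Real.logb (1 - θ) (1 - ℓ / W) := by
      have := Int.lt_ceil.1 hz
      exact_mod_cast this
    have hb1 : (0:ℝ) < 1 - θ := by linarith
    have hlogb : Real.log (1 - θ) < 0 := Real.log_neg hb1 (by linarith)
    have harg : (0:ℝ) < 1 - ℓ / W := by
      have : ℓ / W < 1 := (div_lt_one hWpos).2 hℓlt
      linarith
    rw [Real.logb, lt_div_iff_of_neg hlogb] at hz'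
    have hpow : Real.log ((1-θ)^n) = (n:ℝ) * Real.log (1-θ) := by
      rw [Real.log_pow]
    rw [← hpow] at hz'
    have hcmp := (Real.log_lt_log_iff harg (pow_pos hb1 n)).1 hz'
    have hsv : s n = (1 - (1-θ)^n) * W := by rw [hsdef]
    have h3 : (1 - ℓ / W) * W = W - ℓ := by field_simp
    nlinarith
  have hsval : ∀ n, s n = (1 - (1-θ)^n) * W := fun n => by rw [hsdef]
  have hsnonneg : ∀ n, 0 ≤ s n := by
    intro n
    have h1 : (1-θ)^n ≤ 1 := pow_le_one₀ (by linarith) (by linarith)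
    rw [hsval n]
    nlinarith
  have hspos : ∀ n, 1 ≤ n → 0 < s n := by
    intro n hn
    have h1 : (1-θ)^n ≤ (1-θ)^1 :=
      pow_le_pow_of_le_one (by linarith) (by linarith) hn
    simp only [pow_one] at h1
    rw [hsval n]
    nlinarith
  -- main invariant
  have hInv : ∀ n : ℕ, (n : ℤ) ≤ N → μseq n = Measure.map (fun x => x + s n • e x) μ := by
    intro n
    induction n with
    | zero =>
      intro _
      have h0 : s 0 = 0 := by rw [hsdef]; simp
      have : (fun x : Euc d => x + s 0 • e x) =ᶠ[ae μ] id := by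
        apply Filter.Eventually.of_forall
        intro x
        simp [h0]
      rw [Measure.map_congr this, Measure.map_id, hμ0]
    | succ n ih =>
      intro hn1
      have hn : (n : ℤ) ≤ N := by
        have : ((n:ℤ)) + 1 ≤ N := by exact_mod_cast hn1
        linarith
      have ihn := ih hn
      have hWn : W1 (μseq n) ν = W - s n := by
        rw [ihn]; exact hW1val (s n) (hsnonneg n) (le_of_lt (hsN n hn))
      have hηn : η n = s (n+1) - s n := by
        rw [hη n, hWn, hsdef]
        simp only [pow_succ]
        ring
      have hδs : s n < ℓ := hsN n hn
      -- a.e. differentiability of the current potential at the moved points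
      have hdiff : ∀ᵐ x ∂μ, DifferentiableAt ℝ (useq n) (x + s n • e x) := by
        have hZnull : volume {y : Euc d | ¬ DifferentiableAt ℝ (useq n) y} = 0 :=
          MeasureTheory.ae_iff.1 ((hpot n).1.ae_differentiableAt)
        rcases Nat.eq_zero_or_pos n with h0 | hpos1
        · subst h0
          have h1 : ∀ᵐ x ∂μ, DifferentiableAt ℝ (useq 0) x :=
            hac.ae_le ((hpot 0).1.ae_differentiableAt)
          have hs0 : s 0 = 0 := by rw [hsdef]; simp
          filter_upwards [h1] with x hx
          rw [hs0]
          simpa using hx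
        · have hδpos : 0 < min (s n) (ℓ - s n) := lt_min (hspos n hpos1) (by linarith)
          set δ := min (s n) (ℓ - s n) with hδdef
          have hδ1 : δ ≤ s n := min_le_left _ _
          have hδ2 : δ ≤ ℓ - s n := min_le_right _ _
          have hmargin : ∀ x : Euc d, ℓ ≤ L x → useq 0 x - useq 0 (T₀ x) = L x →
              ∀ r : ℝ, |r| ≤ δ →
              useq 0 ((x + s n • e x) + r • e x) = useq 0 (x + s n • e x) - r := by
            intro x hx1 hx2 r hr
            have hLpos : 0 < ‖x - T₀ x‖ := lt_of_lt_of_le hℓpos hx1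
            rw [abs_le] at hr
            have hLx : ℓ ≤ ‖x - T₀ x‖ := hx1
            have e1 := (ttc_seg hu0lip (x:=x) (b:=T₀ x) (eu := e x) hLpos rfl hx2
              (t := s n + r) (by linarith) (by linarith)).2.2.2.1
            have e2 := (ttc_seg hu0lip (x:=x) (b:=T₀ x) (eu := e x) hLpos rfl hx2
              (t := s n) (hsnonneg n) (by linarith)).2.2.2.1
            have hcomb : (x + s n • e x) + r • e x = x + (s n + r) • e x := by module
            rw [hcomb, e1, e2]
            ring
          have hunit : ∀ x : Euc d, ℓ ≤ L x → ‖e x‖ = 1 := by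
            intro x hx1
            have hLpos : 0 < ‖x - T₀ x‖ := lt_of_lt_of_le hℓpos hx1
            have hnorm : ‖T₀ x - x‖ = ‖x - T₀ x‖ := norm_sub_rev _ _
            rw [hedef]
            simp only
            rw [norm_smul, Real.norm_eq_abs, hnorm, abs_of_nonneg (inv_nonneg.2 hLpos.le),
              inv_mul_cancel₀ hLpos.ne']
          have hkey : ∀ x₁ : Euc d, (ℓ ≤ L x₁ ∧ useq 0 x₁ - useq 0 (T₀ x₁) = L x₁) →
              ∀ x₂ : Euc d, (ℓ ≤ L x₂ ∧ useq 0 x₂ - useq 0 (T₀ x₂) = L x₂) →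
              ‖x₁ - x₂‖ ≤ (1 + s n / δ) * ‖(x₁ + s n • e x₁) - (x₂ + s n • e x₂)‖ := by
            intro x₁ hx₁ x₂ hx₂
            have he₁ : ‖e x₁‖ = 1 := hunit x₁ hx₁.1
            have he₂ : ‖e x₂‖ = 1 := hunit x₂ hx₂.1
            have p1 := hmargin x₁ hx₁.1 hx₁.2 δ (by rw [abs_of_nonneg hδpos.le])
            have m1 := hmargin x₁ hx₁.1 hx₁.2 (-δ) (by rw [abs_neg, abs_of_nonneg hδpos.le])
            have p2 := hmargin x₂ hx₂.1 hx₂.2 δ (by rw [abs_of_nonneg hδpos.le])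
            have m2 := hmargin x₂ hx₂.1 hx₂.2 (-δ) (by rw [abs_neg, abs_of_nonneg hδpos.le])
            rw [neg_smul, ← sub_eq_add_neg, sub_neg_eq_add] at m1 m2
            have hdir := ttc_dir_lipschitz hu0lip hδpos he₁ he₂ p1 m1 p2 m2
            have hxdiff : x₁ - x₂
                = ((x₁ + s n • e x₁) - (x₂ + s n • e x₂)) - s n • (e x₁ - e x₂) := by
              module
            have h4 : ‖x₁ - x₂‖ ≤ ‖(x₁ + s n • e x₁) - (x₂ + s n • e x₂)‖
                + ‖s n • (e x₁ - e x₂)‖ := by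
              rw [hxdiff]; exact norm_sub_le _ _
            have h5 : ‖s n • (e x₁ - e x₂)‖ = s n * ‖e x₁ - e x₂‖ := by
              rw [norm_smul, Real.norm_eq_abs, abs_of_nonneg (hsnonneg n)]
            have h6' : s n * (δ * ‖e x₁ - e x₂‖)
                ≤ s n * ‖(x₁ + s n • e x₁) - (x₂ + s n • e x₂)‖ :=
              mul_le_mul_of_nonneg_left hdir (hsnonneg n)
            have h6 : s n * ‖e x₁ - e x₂‖
                ≤ s n / δ * ‖(x₁ + s n • e x₁) - (x₂ + s n • e x₂)‖ := by
              rw [div_mul_eq_mul_div, le_div_iff₀ hδpos]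
              nlinarith [h6']
            nlinarith [h4, h5, h6]
          have hGoodae : ∀ᵐ x ∂μ, ℓ ≤ L x ∧ useq 0 x - useq 0 (T₀ x) = L x := by
            filter_upwards [hlL, hu0ray] with x a b
            exact ⟨a, b⟩
          set Good : Set (Euc d) := {x | ℓ ≤ L x ∧ useq 0 x - useq 0 (T₀ x) = L x}
            with hGoodDef
          set Z : Set (Euc d) := {y | ¬ DifferentiableAt ℝ (useq n) y} with hZdef
          set Gn : Euc d → Euc d := fun x => x + s n • e x with hGnDef
          set A : Set (Euc d) := Gn ⁻¹' Z ∩ Good with hAdef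
          haveI : Nonempty (Euc d) := ⟨0⟩
          set ψ : Euc d → Euc d := Function.invFunOn Gn Good with hψdef
          have hGinj : ∀ x₁ ∈ Good, ∀ x₂ ∈ Good, Gn x₁ = Gn x₂ → x₁ = x₂ := by
            intro x₁ h₁ x₂ h₂ heq
            have heq' : x₁ + s n • e x₁ = x₂ + s n • e x₂ := heq
            have h3 := hkey x₁ h₁ x₂ h₂
            rw [heq'] at h3
            simp only [sub_self, norm_zero, mul_zero] at h3
            exact sub_eq_zero.1 (norm_le_zero_iff.1 h3)
          have hAnull : μ A = 0 := by
            have hψlip : LipschitzOnWith (Real.toNNReal (1 + s n / δ)) ψ (Gn '' A) := by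
              apply LipschitzOnWith.of_dist_le_mul
              rintro y₁ ⟨x₁, hx₁, rfl⟩ y₂ ⟨x₂, hx₂, rfl⟩
              have m₁ : ψ (Gn x₁) ∈ Good := Function.invFunOn_mem ⟨x₁, hx₁.2, rfl⟩
              have m₂ : ψ (Gn x₂) ∈ Good := Function.invFunOn_mem ⟨x₂, hx₂.2, rfl⟩
              have q₁ : Gn (ψ (Gn x₁)) = Gn x₁ := Function.invFunOn_eq ⟨x₁, hx₁.2, rfl⟩
              have q₂ : Gn (ψ (Gn x₂)) = Gn x₂ := Function.invFunOn_eq ⟨x₂, hx₂.2, rfl⟩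
              have h3 := hkey (ψ (Gn x₁)) m₁ (ψ (Gn x₂)) m₂
              have hq₁ : (ψ (Gn x₁) + s n • e (ψ (Gn x₁))) = Gn x₁ := q₁
              have hq₂ : (ψ (Gn x₂) + s n • e (ψ (Gn x₂))) = Gn x₂ := q₂
              rw [hq₁, hq₂] at h3
              rw [dist_eq_norm, dist_eq_norm]
              have hcoe : ((Real.toNNReal (1 + s n / δ) : NNReal) : ℝ) = 1 + s n / δ := by
                rw [Real.coe_toNNReal]
                have h0 : (0:ℝ) ≤ s n / δ := div_nonneg (hsnonneg n) hδpos.le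
                linarith
              rw [hcoe]
              exact h3
            have hZG : volume (Gn '' A) = 0 := by
              refine measure_mono_null ?_ hZnull
              rintro y ⟨x, hx, rfl⟩
              exact hx.1
            have hψim : volume (ψ '' (Gn '' A)) = 0 := ttc_volume_image_null hψlip hZG
            have hAsub : A ⊆ ψ '' (Gn '' A) := by
              intro a ha
              refine ⟨Gn a, ⟨a, ha, rfl⟩, ?_⟩
              have m : ψ (Gn a) ∈ Good := Function.invFunOn_mem ⟨a, ha.2, rfl⟩
              have q : Gn (ψ (Gn a)) = Gn a := Function.invFunOn_eq ⟨a, ha.2, rfl⟩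
              exact hGinj _ m _ ha.2 q
            exact measure_mono_null hAsub (hac hψim)
          have hGoodnull : μ Goodᶜ = 0 := by
            have h1 := MeasureTheory.ae_iff.1 hGoodae
            simpa [hGoodDef, Set.compl_def] using h1
          have hfinal : μ (Gn ⁻¹' Z) = 0 := by
            refine measure_mono_null (t := A ∪ Goodᶜ) ?_
              (measure_union_null hAnull hGoodnull)
            intro x hx
            by_cases hg : x ∈ Good
            · exact Or.inl ⟨hx, hg⟩
            · exact Or.inr hg
          rw [MeasureTheory.ae_iff]
          exact hfinal
      -- ray property for the current potential
      have hray : ∀ᵐ x ∂μ, useq n (x + s n • e x) - useq n (T₀ x) = L x - s n := by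
        have hunl := (hpot n).1
        have hGae := hG_meas (s n)
        have hGΩ : ∀ᵐ x ∂μ, x + s n • e x ∈ Ω := by
          filter_upwards [hGeom (s n) (hsnonneg n) hδs.le] with x hx
          exact hx.2.2.2.2
        have hiu : Integrable (fun x => useq n (x + s n • e x)) μ := hint _ hunl _ hGae hGΩ
        have hiT : Integrable (fun x => useq n (T₀ x)) μ := hint _ hunl T₀ hT₀ae hTΩ
        have hiu2 : Integrable (fun x => useq n (x + s n • e x) - useq n (T₀ x)) μ :=
          hiu.sub hiT
        have h1 := (hpot n).2
        rw [hWn, ihn, integral_map hGae hunl.continuous.aestronglyMeasurable,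
          hmapint _ hunl, ← integral_sub hiu hiT] at h1
        have hRint : Integrable (fun x => L x - s n) μ := hLint.sub (integrable_const _)
        have hRval : ∫ x, (L x - s n) ∂μ = W - s n := by
          rw [integral_sub hLint (integrable_const _), hLW, integral_const]
          simp
        have hg : ∀ᵐ x ∂μ, 0 ≤ (L x - s n) - (useq n (x + s n • e x) - useq n (T₀ x)) := by
          filter_upwards [hGeom (s n) (hsnonneg n) hδs.le] with x hx
          have hd := hunl.dist_le_mul (x + s n • e x) (T₀ x)
          rw [Real.dist_eq, dist_eq_norm] at hd
          simp only [NNReal.coe_one, one_mul] at hd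
          rw [hx.2.2.1] at hd
          have h2 := le_abs_self (useq n (x + s n • e x) - useq n (T₀ x))
          linarith
        have hzero :
            ∫ x, ((L x - s n) - (useq n (x + s n • e x) - useq n (T₀ x))) ∂μ = 0 := by
          rw [integral_sub hRint hiu2, hRval, h1]
          ring
        have hfin := (integral_eq_zero_iff_of_nonneg_ae hg (hRint.sub hiu2)).1 hzero
        filter_upwards [hfin] with x hx
        have hx' : (L x - s n) - (useq n (x + s n • e x) - useq n (T₀ x)) = 0 := hx
        linarith
      -- compute the update a.e.
      have hstep : ∀ᵐ x ∂μ, fseq n (x + s n • e x) = x + s (n+1) • e x := by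
        filter_upwards [hdiff, hray, hlL, hGeom (s n) (hsnonneg n) hδs.le]
          with x h1 h2 h3 ⟨g1, g2, g3, g4, g5⟩
        set a := x + s n • e x with hadef
        have hne : a ≠ T₀ x := by
          intro hcontra
          rw [hcontra] at g3
          simp only [sub_self, norm_zero] at g3
          have : ℓ ≤ L x := h3
          linarith
        have hab : useq n a - useq n (T₀ x) = ‖a - T₀ x‖ := by
          rw [g3]; exact h2
        have hgr := ttc_gradient_at_ray_start (hpot n).1 hne hab h1
        have hgrval : gradient (useq n) a = -(e x) := by
          rw [hgr]
          rw [g3, g2]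
          have hpos : 0 < L x - s n := by linarith
          rw [smul_neg, smul_smul, inv_mul_cancel₀ hpos.ne', one_smul]
        rw [hf n a h1, hgrval, hηn]
        rw [hadef]
        module
      -- conclude the measure identity
      rw [hiter n, ihn,
        AEMeasurable.map_map_of_aemeasurable ((hfm n).aemeasurable) (hG_meas (s n))]
      exact Measure.map_congr (hstep.mono fun x hx => by simpa [Function.comp] using hx)
  -- conclusion
  intro n hn
  rw [hInv n hn, hW1val (s n) (hsnonneg n) (le_of_lt (hsN n hn)), hsdef]
  ring
end
end

section
/- In the TTC iteration with step sizes η_k = θ(1−θ)^k W₁(μ₀,ν), the composed maps T_n = T_{n−1} ∘ g_{n−1} (with g_{n−1}(x) = x + η_{n−1}∇u₀(x) a.e.) are optimal transport maps for (μ_n, ν) and satisfy ℓ₀(T_n) ≥ ℓ₀(T₀) − W₁(μ₀,ν)(1 − (1−θ)^n), for all 0 ≤ n ≤ N(θ). -/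
open MeasureTheory

noncomputable section

/-! ### Auxiliary lemmas -/

open Set Filter Topology
set_option linter.unusedSectionVars false

section Analytic

variable {E : Type*} [NormedAddCommGroup E] [InnerProductSpace ℝ E] [CompleteSpace E]

local notation "⟪" x ", " y "⟫" => @inner ℝ _ _ x y

theorem lip1_sub_le {u : E → ℝ} (hu : LipschitzWith 1 u) (x y : E) :
    u x - u y ≤ ‖x - y‖ := by
  have h := hu.dist_le_mul x y
  rw [Real.dist_eq] at h
  rw [← dist_eq_norm]
  calc u x - u y ≤ |u x - u y| := le_abs_self _
    _ ≤ 1 * dist x y := h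
    _ = dist x y := one_mul _

theorem norm_est {h e : E} {δ : ℝ} (hδ : 0 < δ) (he : ‖e‖ = 1) (hh : ‖h‖ ≤ δ) :
    ‖h + δ • e‖ ≤ δ + ⟪h, e⟫ + ‖h‖ ^ 2 / (2 * δ) := by
  set a := ‖h + δ • e‖ with ha
  set i := ⟪h, e⟫ with hi
  have hsq : a ^ 2 = ‖h‖ ^ 2 + 2 * (δ * i) + δ ^ 2 := by
    rw [ha, norm_add_sq_real, real_inner_smul_right, norm_smul, Real.norm_eq_abs,
      abs_of_pos hδ, he]
    ring
  have hcs : |i| ≤ ‖h‖ := by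
    calc |i| ≤ ‖h‖ * ‖e‖ := abs_real_inner_le_norm h e
      _ = ‖h‖ := by rw [he, mul_one]
  have hi1 : i ≤ ‖h‖ := le_trans (le_abs_self _) hcs
  have hi2 : -‖h‖ ≤ i := neg_le_of_abs_le hcs
  have ha0 : 0 ≤ a := norm_nonneg _
  have hsq0 : (0:ℝ) ≤ ‖h‖ ^ 2 / (2 * δ) := by positivity
  have hR0 : 0 ≤ δ + i + ‖h‖ ^ 2 / (2 * δ) := by linarith
  have hsqle : a ^ 2 ≤ (δ + i + ‖h‖ ^ 2 / (2 * δ)) ^ 2 := by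
    have hd : (2 * δ) ≠ 0 := by positivity
    have expand : (δ + i + ‖h‖ ^ 2 / (2 * δ)) ^ 2
        = ‖h‖ ^ 2 + 2 * (δ * i) + δ ^ 2 + (i + ‖h‖ ^ 2 / (2 * δ)) ^ 2 := by
      field_simp
      ring
    rw [expand, hsq]
    nlinarith [sq_nonneg (i + ‖h‖ ^ 2 / (2 * δ))]
  nlinarith [hsqle, ha0, hR0]

theorem hasGradientAt_of_two_sided {u : E → ℝ} (hu : LipschitzWith 1 u)
    {z e : E} (he : ‖e‖ = 1) {δ : ℝ} (hδ : 0 < δ)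
    (hseg : ∀ t ∈ Icc (-δ) δ, u (z + t • e) = u z + t) :
    HasGradientAt u e z := by
  rw [hasGradientAt_iff_isLittleO_nhds_zero]
  have key : ∀ h : E, ‖h‖ ≤ δ → |u (z + h) - u z - ⟪e, h⟫| ≤ ‖h‖ ^ 2 / (2 * δ) := by
    intro h hh
    have hupper : u (z + h) - u z ≤ ‖h + δ • e‖ - δ := by
      have h1 : u (z + (-δ) • e) = u z + (-δ) := hseg (-δ) ⟨le_refl _, by linarith⟩
      have h2 : u (z + h) - u (z + (-δ) • e) ≤ ‖(z + h) - (z + (-δ) • e)‖ :=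
        lip1_sub_le hu _ _
      have h3 : (z + h) - (z + (-δ) • e) = h + δ • e := by
        rw [neg_smul]; abel
      rw [h3, h1] at h2
      linarith
    have hlower : δ - ‖(-h) + δ • e‖ ≤ u (z + h) - u z := by
      have h1 : u (z + δ • e) = u z + δ := hseg δ ⟨by linarith, le_refl _⟩
      have h2 : u (z + δ • e) - u (z + h) ≤ ‖(z + δ • e) - (z + h)‖ :=
        lip1_sub_le hu _ _
      have h3 : (z + δ • e) - (z + h) = (-h) + δ • e := by abel
      rw [h3, h1] at h2
      linarith
    have e1 : ‖h + δ • e‖ ≤ δ + ⟪h, e⟫ + ‖h‖ ^ 2 / (2 * δ) := norm_est hδ he hh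
    have e2 : ‖(-h) + δ • e‖ ≤ δ + ⟪-h, e⟫ + ‖(-h)‖ ^ 2 / (2 * δ) :=
      norm_est hδ he (by rwa [norm_neg])
    rw [inner_neg_left, norm_neg] at e2
    have hie : ⟪e, h⟫ = ⟪h, e⟫ := real_inner_comm h e
    rw [abs_le]
    constructor <;> [skip; skip] <;> rw [hie] <;> linarith
  rw [Asymptotics.isLittleO_iff]
  intro c hc
  have hball : Metric.ball (0 : E) (min δ (2 * δ * c)) ∈ 𝓝 (0 : E) :=
    Metric.ball_mem_nhds _ (lt_min hδ (by positivity))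
  filter_upwards [hball] with h hmem
  rw [Metric.mem_ball, dist_zero_right] at hmem
  have hh1 : ‖h‖ ≤ δ := le_of_lt (lt_of_lt_of_le hmem (min_le_left _ _))
  have hh2 : ‖h‖ ≤ 2 * δ * c := le_of_lt (lt_of_lt_of_le hmem (min_le_right _ _))
  have := key h hh1
  rw [Real.norm_eq_abs]
  calc |u (z + h) - u z - ⟪e, h⟫| ≤ ‖h‖ ^ 2 / (2 * δ) := this
    _ = ‖h‖ * ‖h‖ / (2 * δ) := by ring
    _ ≤ (2 * δ * c) * ‖h‖ / (2 * δ) := by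
        have := mul_le_mul_of_nonneg_right hh2 (norm_nonneg h)
        apply div_le_div_of_nonneg_right this (by positivity)
    _ = c * ‖h‖ := by field_simp

theorem gradient_eq_of_ray {u : E → ℝ} (hu : LipschitzWith 1 u) {x e : E}
    (hd : DifferentiableAt ℝ u x) (he : ‖e‖ = 1) {L : ℝ} (hL : 0 < L)
    (hseg : ∀ s ∈ Icc (0:ℝ) L, u (x - s • e) = u x - s) :
    gradient u x = e := by
  have hψ : HasDerivAt (fun s : ℝ => x - s • e) (-e) 0 := by
    simpa using ((hasDerivAt_id (0:ℝ)).smul_const e).const_sub x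
  have hl : HasFDerivAt u (fderiv ℝ u x) ((fun s : ℝ => x - s • e) 0) := by
    simpa using hd.hasFDerivAt
  have hφ : HasDerivAt (fun s : ℝ => u (x - s • e)) (fderiv ℝ u x (-e)) 0 :=
    hl.comp_hasDerivAt 0 hψ
  have hA : HasDerivWithinAt (fun s : ℝ => u (x - s • e)) (fderiv ℝ u x (-e)) (Icc 0 L) 0 :=
    hφ.hasDerivWithinAt
  have haff : HasDerivWithinAt (fun s : ℝ => u x - s) (-1) (Icc (0:ℝ) L) 0 := by
    simpa using (((hasDerivAt_id (0:ℝ)).const_sub (u x)).hasDerivWithinAt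
      (s := Icc (0:ℝ) L))
  have hB : HasDerivWithinAt (fun s : ℝ => u (x - s • e)) (-1) (Icc (0:ℝ) L) 0 := by
    apply haff.congr
    · intro s hs; exact hseg s hs
    · simpa using hseg 0 ⟨le_refl _, hL.le⟩
  have hud : UniqueDiffWithinAt ℝ (Icc (0:ℝ) L) 0 :=
    (uniqueDiffOn_Icc hL) 0 ⟨le_refl _, hL.le⟩
  have hder : fderiv ℝ u x (-e) = -1 := by
    rw [← hA.derivWithin hud, ← hB.derivWithin hud]
  have h1 : fderiv ℝ u x e = 1 := by
    have : fderiv ℝ u x (-e) = -(fderiv ℝ u x e) := (fderiv ℝ u x).map_neg e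
    rw [this] at hder; linarith
  have hnorm : ‖fderiv ℝ u x‖ ≤ 1 := by
    simpa using norm_fderiv_le_of_lipschitz ℝ hu (x₀ := x)
  have htd : InnerProductSpace.toDual ℝ E (gradient u x) = fderiv ℝ u x :=
    (hd.hasGradientAt.hasFDerivAt).unique hd.hasFDerivAt
  have hge : ⟪gradient u x, e⟫ = 1 := by
    rw [← InnerProductSpace.toDual_apply_apply, htd, h1]
  have hgn : ‖gradient u x‖ ≤ 1 := by
    rw [← (InnerProductSpace.toDual ℝ E).norm_map (gradient u x), htd]; exact hnorm
  have hz : ‖gradient u x - e‖ ^ 2 ≤ 0 := by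
    rw [norm_sub_sq_real, hge, he]
    nlinarith [norm_nonneg (gradient u x)]
  have hz' : gradient u x - e = 0 := by
    have := le_antisymm hz (by positivity)
    have h2 : ‖gradient u x - e‖ = 0 := by nlinarith [norm_nonneg (gradient u x - e)]
    rwa [norm_eq_zero] at h2
  exact sub_eq_zero.mp hz'

/-- Equality along the segment from `x` to `y` for a Kantorovich potential. -/
theorem seg_of_eq {u : E → ℝ} (hu : LipschitzWith 1 u) {x y : E}
    (hL : 0 < ‖x - y‖) (heq : u x - u y = ‖x - y‖) {e : E}
    (hee : x - y = ‖x - y‖ • e) :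
    ∀ s ∈ Icc (0:ℝ) ‖x - y‖, u (x - s • e) = u x - s := by
  intro s hs
  obtain ⟨hs0, hsL⟩ := hs
  set L := ‖x - y‖ with hLdef
  have he1 : ‖e‖ = 1 := by
    have h0 : ‖x - y‖ = ‖L • e‖ := by rw [← hee]
    rw [norm_smul, Real.norm_eq_abs, abs_of_pos hL] at h0
    have hL0 : L ≠ 0 := ne_of_gt hL
    have h4 : L * 1 = L * ‖e‖ := by rw [mul_one]; exact h0
    exact (mul_left_cancel₀ hL0 h4).symm
  have h1 : u x - u (x - s • e) ≤ s := by
    have := lip1_sub_le hu x (x - s • e)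
    have h3 : x - (x - s • e) = s • e := by abel
    rw [h3, norm_smul, Real.norm_eq_abs, abs_of_nonneg hs0, he1, mul_one] at this
    exact this
  have h2 : u (x - s • e) - u y ≤ L - s := by
    have := lip1_sub_le hu (x - s • e) y
    have h3 : (x - s • e) - y = (L - s) • e := by
      rw [sub_smul, ← hee]; abel
    rw [h3, norm_smul, Real.norm_eq_abs, abs_of_nonneg (by linarith), he1, mul_one] at this
    exact this
  linarith

/-- Shifting along the ray: differentiability and gradient at interior points. -/
theorem ray_shift {u : E → ℝ} (hu : LipschitzWith 1 u) {x e : E} (he : ‖e‖ = 1)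
    {L η : ℝ} (h0 : 0 < η) (hηL : η < L)
    (hseg : ∀ s ∈ Icc (0:ℝ) L, u (x - s • e) = u x - s) :
    HasGradientAt u e (x - η • e) ∧
      (u (x - η • e) = u x - η) ∧
      ∀ s ∈ Icc (0:ℝ) (L - η), u ((x - η • e) - s • e) = u (x - η • e) - s := by
  have hLpos : 0 < L := lt_trans h0 hηL
  have hval : u (x - η • e) = u x - η := hseg η ⟨h0.le, hηL.le⟩
  refine ⟨?_, hval, ?_⟩
  · set δ := min η (L - η) with hδdef
    have hδ : 0 < δ := lt_min h0 (by linarith)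
    apply hasGradientAt_of_two_sided hu he hδ
    intro t ht
    obtain ⟨ht1, ht2⟩ := ht
    have hδ1 : δ ≤ η := min_le_left _ _
    have hδ2 : δ ≤ L - η := min_le_right _ _
    have hrw : (x - η • e) + t • e = x - (η - t) • e := by
      rw [sub_smul]; abel
    rw [hrw, hseg (η - t) ⟨by linarith, by linarith⟩, hval]
    ring
  · intro s hs
    obtain ⟨hs0, hs1⟩ := hs
    have hrw : (x - η • e) - s • e = x - (η + s) • e := by
      rw [add_smul]; abel
    rw [hrw, hseg (η + s) ⟨by linarith, by linarith⟩, hval]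
    ring

/-- Density of rationals upgrade for the segment property. -/
theorem seg_of_rat {u : E → ℝ} (hc : Continuous u) {x e : E} {L : ℝ}
    (h : ∀ q : ℚ, 0 ≤ (q:ℝ) → (q:ℝ) ≤ L → u (x - (q:ℝ) • e) = u x - q) :
    ∀ s ∈ Icc (0:ℝ) L, u (x - s • e) = u x - s := by
  intro s hs
  obtain ⟨hs0, hsL⟩ := hs
  rcases eq_or_lt_of_le hs0 with h0 | h0
  · rw [← h0]; simp
  have hseq : ∀ k : ℕ, ∃ q : ℚ, max 0 (s - 1/(k+1)) < (q:ℝ) ∧ (q:ℝ) < s := by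
    intro k
    apply exists_rat_btwn
    apply max_lt h0
    have : (0:ℝ) < 1/(k+1) := by positivity
    linarith
  choose q hq1 hq2 using hseq
  have hlow : ∀ k : ℕ, s - 1/(k+1) ≤ (q k : ℝ) := fun k =>
    le_of_lt (lt_of_le_of_lt (le_max_right _ _) (hq1 k))
  have hq0 : ∀ k : ℕ, (0:ℝ) ≤ q k := fun k =>
    le_of_lt (lt_of_le_of_lt (le_max_left _ _) (hq1 k))
  have hqL : ∀ k : ℕ, (q k : ℝ) ≤ L := fun k => le_trans (hq2 k).le hsL
  have htendlow : Tendsto (fun k : ℕ => s - 1/(k+1:ℝ)) atTop (𝓝 s) := by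
    have := tendsto_one_div_add_atTop_nhds_zero_nat (𝕜 := ℝ)
    have h2 := (tendsto_const_nhds (x := s) (f := atTop (α := ℕ))).sub this
    simpa using h2
  have htend : Tendsto (fun k : ℕ => ((q k : ℝ))) atTop (𝓝 s) :=
    tendsto_of_tendsto_of_tendsto_of_le_of_le htendlow tendsto_const_nhds
      hlow (fun k => (hq2 k).le)
  have h1 : Tendsto (fun k => u (x - (q k:ℝ) • e)) atTop (𝓝 (u (x - s • e))) := by
    apply (hc.tendsto _).comp
    exact tendsto_const_nhds.sub (htend.smul_const e)
  have h2 : (fun k => u (x - (q k:ℝ) • e)) = fun k => u x - (q k : ℝ) := by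
    funext k; exact h (q k) (hq0 k) (hqL k)
  rw [h2] at h1
  have h3 : Tendsto (fun k : ℕ => u x - (q k : ℝ)) atTop (𝓝 (u x - s)) :=
    tendsto_const_nhds.sub htend
  exact tendsto_nhds_unique h1 h3

end Analytic

section MeasureHelpers

variable {d : ℕ}

theorem measurable_gradient' (u : Euc d → ℝ) : Measurable (gradient u) := by
  have h : gradient u = fun x => (InnerProductSpace.toDual ℝ (Euc d)).symm (fderiv ℝ u x) :=
    rfl
  rw [h]
  exact ((InnerProductSpace.toDual ℝ (Euc d)).symm.continuous.measurable).comp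
    (measurable_fderiv ℝ u)

theorem ae_mem_of_compl_null {μ' : Measure (Euc d)} {Ω : Set (Euc d)} (h : μ' Ωᶜ = 0) :
    ∀ᵐ x ∂μ', x ∈ Ω := by
  rw [ae_iff]
  exact h

theorem integrable_of_bound {μ' : Measure (Euc d)} [IsProbabilityMeasure μ']
    {f : Euc d → ℝ} (hm : AEStronglyMeasurable f μ') (C : ℝ)
    (h : ∀ᵐ x ∂μ', ‖f x‖ ≤ C) : Integrable f μ' :=
  Integrable.mono' (integrable_const C) hm h

theorem aemeasurable_of_map_prob {μ' ν' : Measure (Euc d)} [IsProbabilityMeasure ν']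
    {T : Euc d → Euc d} (h : Measure.map T μ' = ν') : AEMeasurable T μ' := by
  by_contra hc
  rw [Measure.map_of_not_aemeasurable hc] at h
  have h2 : ν' univ = 1 := measure_univ
  rw [← h] at h2
  simp at h2

theorem map_mem_ae {μ' ν' : Measure (Euc d)} {Ω : Set (Euc d)} (hΩm : MeasurableSet Ω)
    {T : Euc d → Euc d} (hTm : AEMeasurable T μ') (h : Measure.map T μ' = ν')
    (hν' : ν' Ωᶜ = 0) : ∀ᵐ x ∂μ', T x ∈ Ω := by
  have h2 : μ' (T ⁻¹' Ωᶜ) = 0 := by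
    rw [← Measure.map_apply_of_aemeasurable hTm hΩm.compl, h, hν']
  rw [ae_iff]
  exact h2

/-- Lipschitz functions are integrable against compactly supported probability measures. -/
theorem integrable_lip {Ω : Set (Euc d)} (hΩc : IsCompact Ω)
    {μ' : Measure (Euc d)} [IsProbabilityMeasure μ'] (hsupp : μ' Ωᶜ = 0)
    {u : Euc d → ℝ} (hu : LipschitzWith 1 u) : Integrable u μ' := by
  obtain ⟨R, hR⟩ := hΩc.isBounded.subset_closedBall 0
  apply integrable_of_bound hu.continuous.aestronglyMeasurable (|u 0| + R)
  filter_upwards [ae_mem_of_compl_null hsupp] with x hx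
  have h1 : u x - u 0 ≤ ‖x - 0‖ := lip1_sub_le hu x 0
  have h2 : u 0 - u x ≤ ‖(0:Euc d) - x‖ := lip1_sub_le hu 0 x
  have hxR : ‖x‖ ≤ R := by simpa [dist_zero_right] using hR hx
  rw [sub_zero] at h1
  rw [zero_sub, norm_neg] at h2
  rw [Real.norm_eq_abs, abs_le]
  constructor
  · have := neg_abs_le (u 0); linarith
  · have := le_abs_self (u 0); linarith

theorem lip_comp_integrable {Ω : Set (Euc d)} (hΩc : IsCompact Ω)
    {μ' : Measure (Euc d)} [IsProbabilityMeasure μ'] {T : Euc d → Euc d}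
    (hTm : AEMeasurable T μ') (hTΩ : ∀ᵐ x ∂μ', T x ∈ Ω)
    {u : Euc d → ℝ} (hu : LipschitzWith 1 u) : Integrable (fun x => u (T x)) μ' := by
  obtain ⟨R, hR⟩ := hΩc.isBounded.subset_closedBall 0
  apply integrable_of_bound (hu.continuous.measurable.comp_aemeasurable hTm).aestronglyMeasurable
    (|u 0| + R)
  filter_upwards [hTΩ] with x hx
  simp only [Function.comp_apply]
  have h1 : u (T x) - u 0 ≤ ‖T x - 0‖ := lip1_sub_le hu _ _
  have h2 : u 0 - u (T x) ≤ ‖(0:Euc d) - T x‖ := lip1_sub_le hu _ _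
  have hxR : ‖T x‖ ≤ R := by simpa [dist_zero_right] using hR hx
  rw [sub_zero] at h1
  rw [zero_sub, norm_neg] at h2
  rw [Real.norm_eq_abs, abs_le]
  constructor
  · have := neg_abs_le (u 0); linarith
  · have := le_abs_self (u 0); linarith

theorem cost_integrable {Ω : Set (Euc d)} (hΩc : IsCompact Ω)
    {μ' : Measure (Euc d)} [IsProbabilityMeasure μ'] (h1 : μ' Ωᶜ = 0)
    {T : Euc d → Euc d} (hTm : AEMeasurable T μ') (hTΩ : ∀ᵐ x ∂μ', T x ∈ Ω) :
    Integrable (fun x => ‖x - T x‖) μ' := by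
  obtain ⟨R, hR⟩ := hΩc.isBounded.subset_closedBall 0
  apply integrable_of_bound ((aemeasurable_id.sub hTm).norm.aestronglyMeasurable) (2 * R)
  filter_upwards [ae_mem_of_compl_null h1, hTΩ] with x hx hTx
  have hxa : ‖x‖ ≤ R := by simpa [dist_zero_right] using hR hx
  have hxb : ‖T x‖ ≤ R := by simpa [dist_zero_right] using hR hTx
  rw [norm_norm]
  calc ‖x - T x‖ ≤ ‖x‖ + ‖T x‖ := norm_sub_le _ _
    _ ≤ 2 * R := by linarith

theorem W1_bddAbove {Ω : Set (Euc d)} (hΩc : IsCompact Ω) (hΩne : Ω.Nonempty)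
    {μ' ν' : Measure (Euc d)} [IsProbabilityMeasure μ'] [IsProbabilityMeasure ν']
    (h1 : μ' Ωᶜ = 0) (h2 : ν' Ωᶜ = 0) :
    BddAbove {r : ℝ | ∃ u : Euc d → ℝ, LipschitzWith 1 u ∧
      r = (∫ x, u x ∂μ') - ∫ y, u y ∂ν'} := by
  obtain ⟨R, hR⟩ := hΩc.isBounded.subset_closedBall 0
  obtain ⟨x₀, hx₀⟩ := hΩne
  refine ⟨4 * R, ?_⟩
  rintro r ⟨u, hu, rfl⟩
  have hbound : ∀ (κ : Measure (Euc d)), IsProbabilityMeasure κ → κ Ωᶜ = 0 →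
      |(∫ x, u x ∂κ) - u x₀| ≤ 2 * R := by
    intro κ hκ hκ0
    have hint : Integrable u κ := integrable_lip hΩc hκ0 hu
    have heq : (∫ x, u x ∂κ) - u x₀ = ∫ x, (u x - u x₀) ∂κ := by
      rw [integral_sub hint (integrable_const _), integral_const]
      simp
    rw [heq]
    have hae : ∀ᵐ x ∂κ, ‖u x - u x₀‖ ≤ 2 * R := by
      filter_upwards [ae_mem_of_compl_null hκ0] with x hx
      have h1' : u x - u x₀ ≤ ‖x - x₀‖ := lip1_sub_le hu x x₀
      have h2' : u x₀ - u x ≤ ‖x₀ - x‖ := lip1_sub_le hu x₀ x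
      rw [← neg_sub x x₀, norm_neg] at h2'
      have hd : ‖x - x₀‖ ≤ 2 * R := by
        have hxa : ‖x‖ ≤ R := by simpa [dist_zero_right] using hR hx
        have hxb : ‖x₀‖ ≤ R := by simpa [dist_zero_right] using hR hx₀
        calc ‖x - x₀‖ ≤ ‖x‖ + ‖x₀‖ := norm_sub_le _ _
          _ ≤ 2 * R := by linarith
      rw [Real.norm_eq_abs, abs_le]
      constructor <;> linarith
    calc |∫ x, (u x - u x₀) ∂κ| ≤ ∫ x, ‖u x - u x₀‖ ∂κ := by
          rw [← Real.norm_eq_abs]; exact norm_integral_le_integral_norm _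
      _ ≤ ∫ _x, 2 * R ∂κ := by
          apply integral_mono_ae (hint.sub (integrable_const _)).norm (integrable_const _) hae
      _ = 2 * R := by simp
  have hμb := hbound μ' ‹_› h1
  have hνb := hbound ν' ‹_› h2
  rw [abs_le] at hμb hνb
  linarith [hμb.1, hμb.2, hνb.1, hνb.2]

theorem zero_mem_W1set {μ' ν' : Measure (Euc d)} :
    (0:ℝ) ∈ {r : ℝ | ∃ u : Euc d → ℝ, LipschitzWith 1 u ∧
      r = (∫ x, u x ∂μ') - ∫ y, u y ∂ν'} :=
  ⟨fun _ => 0, (LipschitzWith.const (0:ℝ)).weaken zero_le_one, by simp⟩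

theorem le_W1 {Ω : Set (Euc d)} (hΩc : IsCompact Ω) (hΩne : Ω.Nonempty)
    {μ' ν' : Measure (Euc d)} [IsProbabilityMeasure μ'] [IsProbabilityMeasure ν']
    (h1 : μ' Ωᶜ = 0) (h2 : ν' Ωᶜ = 0) {u : Euc d → ℝ} (hu : LipschitzWith 1 u) :
    (∫ x, u x ∂μ') - ∫ y, u y ∂ν' ≤ W1 μ' ν' :=
  le_csSup (W1_bddAbove hΩc hΩne h1 h2) ⟨u, hu, rfl⟩

theorem W1_le_cost {Ω : Set (Euc d)} (hΩc : IsCompact Ω) (hΩm : MeasurableSet Ω)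
    {μ' ν' : Measure (Euc d)} [IsProbabilityMeasure μ'] [IsProbabilityMeasure ν']
    (h1 : μ' Ωᶜ = 0) (h2 : ν' Ωᶜ = 0) {T : Euc d → Euc d}
    (hT : Measure.map T μ' = ν') :
    W1 μ' ν' ≤ ∫ x, ‖x - T x‖ ∂μ' := by
  have hTm : AEMeasurable T μ' := aemeasurable_of_map_prob hT
  have hTΩ : ∀ᵐ x ∂μ', T x ∈ Ω := map_mem_ae hΩm hTm hT h2
  have hcost_int : Integrable (fun x => ‖x - T x‖) μ' := cost_integrable hΩc h1 hTm hTΩ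
  apply csSup_le ⟨0, zero_mem_W1set⟩
  rintro r ⟨u, hu, rfl⟩
  have hint : Integrable u μ' := integrable_lip hΩc h1 hu
  have hintT : Integrable (fun x => u (T x)) μ' := lip_comp_integrable hΩc hTm hTΩ hu
  have hνint : (∫ y, u y ∂ν') = ∫ x, u (T x) ∂μ' := by
    rw [← hT, integral_map hTm hu.continuous.aestronglyMeasurable]
  rw [hνint, ← integral_sub hint hintT]
  apply integral_mono_ae (hint.sub hintT) hcost_int
  filter_upwards with x
  exact lip1_sub_le hu x (T x)

theorem ae_ell0_le {μ' : Measure (Euc d)} {T : Euc d → Euc d} :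
    ∀ᵐ x ∂μ', ell0 T μ' ≤ ‖x - T x‖ := by
  apply ae_essInf_le
  exact ⟨0, eventually_map.2 (Eventually.of_forall fun x => norm_nonneg _)⟩

theorem le_ell0 {μ' : Measure (Euc d)} [IsProbabilityMeasure μ'] {T : Euc d → Euc d}
    {c B : ℝ} (h : ∀ᵐ x ∂μ', c ≤ ‖x - T x‖) (hB : ∀ᵐ x ∂μ', ‖x - T x‖ ≤ B) :
    c ≤ ell0 T μ' := by
  haveI : (ae μ').NeBot := ae_neBot.2 (IsProbabilityMeasure.ne_zero μ')
  exact le_liminf_of_le (isCoboundedUnder_ge_of_eventually_le _ hB) h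

end MeasureHelpers

/-! ### The TTC invariants -/

/-- The structural a.e. invariant along the TTC iteration. -/
def TTCRay {d : ℕ} (Ω : Set (Euc d)) (u₀ : Euc d → ℝ) (T : Euc d → Euc d) (cv : ℝ)
    (x : Euc d) : Prop :=
  x ∈ Ω ∧ T x ∈ Ω ∧ cv ≤ ‖x - T x‖ ∧ DifferentiableAt ℝ u₀ x ∧
    ‖gradient u₀ x‖ = 1 ∧ x - T x = ‖x - T x‖ • gradient u₀ x ∧
    ∀ q : ℚ, 0 ≤ (q:ℝ) → (q:ℝ) ≤ ‖x - T x‖ →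
      u₀ (x - (q:ℝ) • gradient u₀ x) = u₀ x - q

/-- The full invariant. -/
def TTCGood {d : ℕ} (Ω : Set (Euc d)) (u₀ : Euc d → ℝ) (ν : Measure (Euc d))
    (T : Euc d → Euc d) (μn : Measure (Euc d)) (cv : ℝ) : Prop :=
  Measure.map T μn = ν ∧ IsProbabilityMeasure μn ∧ μn Ωᶜ = 0 ∧
    (∫ x, ‖x - T x‖ ∂μn) = W1 μn ν ∧ ((∫ x, u₀ x ∂μn) - ∫ y, u₀ y ∂ν = W1 μn ν) ∧
    (∀ᵐ x ∂μn, TTCRay Ω u₀ T cv x)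

section RayLemmas

variable {d : ℕ}

theorem TTCRay_congr {Ω : Set (Euc d)} {u₀ : Euc d → ℝ} {T T' : Euc d → Euc d} {cv : ℝ}
    {x : Euc d} (h : T x = T' x) (hr : TTCRay Ω u₀ T cv x) : TTCRay Ω u₀ T' cv x := by
  unfold TTCRay at hr ⊢
  rw [← h]
  exact hr

theorem TTCRay_real_seg {Ω : Set (Euc d)} {u₀ : Euc d → ℝ} (hu₀lip : LipschitzWith 1 u₀)
    {T : Euc d → Euc d} {cv : ℝ} {x : Euc d} (hr : TTCRay Ω u₀ T cv x) :
    ∀ s ∈ Icc (0:ℝ) ‖x - T x‖, u₀ (x - s • gradient u₀ x) = u₀ x - s := by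
  apply seg_of_rat hu₀lip.continuous
  intro q hq0 hqL
  exact hr.2.2.2.2.2.2 q hq0 hqL

theorem TTCRay_measurableSet {Ω : Set (Euc d)} (hΩm : MeasurableSet Ω)
    (u₀ : Euc d → ℝ) (hu₀c : Continuous u₀) {T : Euc d → Euc d} (hTm : Measurable T)
    (cv : ℝ) : MeasurableSet {x | TTCRay Ω u₀ T cv x} := by
  have hgradm : Measurable (gradient u₀) := measurable_gradient' u₀
  have hFm : Measurable fun x : Euc d => ‖x - T x‖ := (measurable_id.sub hTm).norm
  have h1 : MeasurableSet {x : Euc d | x ∈ Ω} := hΩm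
  have h2 : MeasurableSet {x : Euc d | T x ∈ Ω} := hTm hΩm
  have h3 : MeasurableSet {x : Euc d | cv ≤ ‖x - T x‖} :=
    measurableSet_le measurable_const hFm
  have h4 : MeasurableSet {x : Euc d | DifferentiableAt ℝ u₀ x} :=
    measurableSet_of_differentiableAt ℝ u₀
  have h5 : MeasurableSet {x : Euc d | ‖gradient u₀ x‖ = 1} :=
    measurableSet_eq_fun hgradm.norm measurable_const
  have h6 : MeasurableSet {x : Euc d | x - T x = ‖x - T x‖ • gradient u₀ x} :=
    measurableSet_eq_fun (measurable_id.sub hTm) (hFm.smul hgradm)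
  have h7 : MeasurableSet {x : Euc d | ∀ q : ℚ, 0 ≤ (q:ℝ) → (q:ℝ) ≤ ‖x - T x‖ →
      u₀ (x - (q:ℝ) • gradient u₀ x) = u₀ x - q} := by
    have hset : {x : Euc d | ∀ q : ℚ, 0 ≤ (q:ℝ) → (q:ℝ) ≤ ‖x - T x‖ →
        u₀ (x - (q:ℝ) • gradient u₀ x) = u₀ x - q} =
        ⋂ (q : ℚ), {x : Euc d | 0 ≤ (q:ℝ) → (q:ℝ) ≤ ‖x - T x‖ →
          u₀ (x - (q:ℝ) • gradient u₀ x) = u₀ x - q} := by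
      ext x; simp only [mem_setOf_eq, mem_iInter]
    rw [hset]
    apply MeasurableSet.iInter
    intro q
    by_cases hq : (0:ℝ) ≤ (q:ℝ)
    · have hqset : {x : Euc d | 0 ≤ (q:ℝ) → (q:ℝ) ≤ ‖x - T x‖ →
          u₀ (x - (q:ℝ) • gradient u₀ x) = u₀ x - q} =
          {x : Euc d | (q:ℝ) ≤ ‖x - T x‖}ᶜ ∪
            {x : Euc d | u₀ (x - (q:ℝ) • gradient u₀ x) = u₀ x - q} := by
        ext x
        simp only [mem_setOf_eq, mem_union, mem_compl_iff, hq, true_implies]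
        tauto
      rw [hqset]
      apply MeasurableSet.union
      · exact (measurableSet_le measurable_const hFm).compl
      · apply measurableSet_eq_fun
        · exact hu₀c.measurable.comp (measurable_id.sub (hgradm.const_smul (q:ℝ)))
        · exact hu₀c.measurable.sub measurable_const
    · have hqset : {x : Euc d | 0 ≤ (q:ℝ) → (q:ℝ) ≤ ‖x - T x‖ →
          u₀ (x - (q:ℝ) • gradient u₀ x) = u₀ x - q} = univ := by
        ext x; simp only [mem_setOf_eq, mem_univ, iff_true]
        intro h0; exact absurd h0 hq
      rw [hqset]
      exact MeasurableSet.univ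
  have hray : {x | TTCRay Ω u₀ T cv x} =
      ({x : Euc d | x ∈ Ω} ∩ ({x : Euc d | T x ∈ Ω} ∩ ({x : Euc d | cv ≤ ‖x - T x‖} ∩
        ({x : Euc d | DifferentiableAt ℝ u₀ x} ∩ ({x : Euc d | ‖gradient u₀ x‖ = 1} ∩
        ({x : Euc d | x - T x = ‖x - T x‖ • gradient u₀ x} ∩
        {x : Euc d | ∀ q : ℚ, 0 ≤ (q:ℝ) → (q:ℝ) ≤ ‖x - T x‖ →
          u₀ (x - (q:ℝ) • gradient u₀ x) = u₀ x - q})))))) := by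
    ext x
    simp only [TTCRay, mem_setOf_eq, mem_inter_iff]
  rw [hray]
  exact h1.inter (h2.inter (h3.inter (h4.inter (h5.inter (h6.inter h7)))))

theorem ae_map_ray {Ω : Set (Euc d)} (hΩm : MeasurableSet Ω) {u₀ : Euc d → ℝ}
    (hu₀c : Continuous u₀) {μn : Measure (Euc d)} {f T' : Euc d → Euc d}
    (hfm : Measurable f) (hT' : AEMeasurable T' (Measure.map f μn)) {cv : ℝ}
    (h : ∀ᵐ x ∂μn, TTCRay Ω u₀ T' cv (f x)) :
    ∀ᵐ y ∂(Measure.map f μn), TTCRay Ω u₀ T' cv y := by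
  have hmk : T' =ᵐ[Measure.map f μn] hT'.mk T' := hT'.ae_eq_mk
  have h2 : ∀ᵐ x ∂μn, T' (f x) = hT'.mk T' (f x) := ae_of_ae_map hfm.aemeasurable hmk
  have h3 : ∀ᵐ x ∂μn, TTCRay Ω u₀ (hT'.mk T') cv (f x) := by
    filter_upwards [h, h2] with x hx he
    exact TTCRay_congr he hx
  have h4 : ∀ᵐ y ∂(Measure.map f μn), TTCRay Ω u₀ (hT'.mk T') cv y :=
    (ae_map_iff hfm.aemeasurable
      (TTCRay_measurableSet hΩm u₀ hu₀c hT'.measurable_mk cv)).2 h3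
  filter_upwards [h4, hmk] with y hy he
  exact TTCRay_congr he.symm hy

end RayLemmas

/-! ### Base case and inductive step -/

theorem ttc_base {d : ℕ} {Ω : Set (Euc d)} (hΩc : IsCompact Ω)
    {μ ν : Measure (Euc d)} [IsProbabilityMeasure μ] [IsProbabilityMeasure ν]
    (hμΩ : μ Ωᶜ = 0) (hνΩ : ν Ωᶜ = 0) (hac : μ ≪ volume)
    {u₀ : Euc d → ℝ} (hu₀ : IsKantorovichPotential u₀ μ ν)
    {T₀ : Euc d → Euc d} (hT₀ : IsOptimalMap T₀ μ ν)
    (hℓpos : 0 < ell0 T₀ μ) :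
    TTCGood Ω u₀ ν T₀ μ (ell0 T₀ μ) := by
  obtain ⟨hu₀lip, hu₀pot⟩ := hu₀
  obtain ⟨hT₀map, hT₀cost⟩ := hT₀
  have hΩm : MeasurableSet Ω := hΩc.isClosed.measurableSet
  have hT₀aem : AEMeasurable T₀ μ := aemeasurable_of_map_prob hT₀map
  have hmemΩ : ∀ᵐ x ∂μ, x ∈ Ω := ae_mem_of_compl_null hμΩ
  have hTΩ : ∀ᵐ x ∂μ, T₀ x ∈ Ω := map_mem_ae hΩm hT₀aem hT₀map hνΩ
  have hdiff : ∀ᵐ x ∂μ, DifferentiableAt ℝ u₀ x := hac.ae_le hu₀lip.ae_differentiableAt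
  have hℓle : ∀ᵐ x ∂μ, ell0 T₀ μ ≤ ‖x - T₀ x‖ := ae_ell0_le
  have hint_cost : Integrable (fun x => ‖x - T₀ x‖) μ := cost_integrable hΩc hμΩ hT₀aem hTΩ
  have hint_u : Integrable u₀ μ := integrable_lip hΩc hμΩ hu₀lip
  have hint_uT : Integrable (fun x => u₀ (T₀ x)) μ := lip_comp_integrable hΩc hT₀aem hTΩ hu₀lip
  have hν_int : (∫ y, u₀ y ∂ν) = ∫ x, u₀ (T₀ x) ∂μ := by
    rw [← hT₀map, integral_map hT₀aem hu₀lip.continuous.aestronglyMeasurable]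
  have hF : ∀ᵐ x ∂μ, u₀ x - u₀ (T₀ x) = ‖x - T₀ x‖ := by
    have hnn : 0 ≤ᵐ[μ] fun x => ‖x - T₀ x‖ - (u₀ x - u₀ (T₀ x)) :=
      Eventually.of_forall fun x => by
        have := lip1_sub_le hu₀lip x (T₀ x); simp only [Pi.zero_apply]; linarith
    have hFint : Integrable (fun x => ‖x - T₀ x‖ - (u₀ x - u₀ (T₀ x))) μ :=
      hint_cost.sub (hint_u.sub hint_uT)
    have hsub_int : Integrable (fun x => u₀ x - u₀ (T₀ x)) μ := hint_u.sub hint_uT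
    have hI0 : (∫ x, (‖x - T₀ x‖ - (u₀ x - u₀ (T₀ x))) ∂μ) = 0 := by
      have e1 : (∫ x, (‖x - T₀ x‖ - (u₀ x - u₀ (T₀ x))) ∂μ)
          = (∫ x, ‖x - T₀ x‖ ∂μ) - ∫ x, (u₀ x - u₀ (T₀ x)) ∂μ :=
        integral_sub hint_cost hsub_int
      have e2 : (∫ x, (u₀ x - u₀ (T₀ x)) ∂μ)
          = (∫ x, u₀ x ∂μ) - ∫ x, u₀ (T₀ x) ∂μ := integral_sub hint_u hint_uT
      rw [e1, e2, ← hν_int, hT₀cost, hu₀pot]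
      ring
    have := (integral_eq_zero_iff_of_nonneg_ae hnn hFint).1 hI0
    filter_upwards [this] with x hx
    simp only [Pi.zero_apply] at hx
    linarith
  refine ⟨hT₀map, inferInstance, hμΩ, hT₀cost, hu₀pot, ?_⟩
  filter_upwards [hmemΩ, hTΩ, hdiff, hℓle, hF] with x hxΩ hTxΩ hdx hlx heqx
  have hLpos : 0 < ‖x - T₀ x‖ := lt_of_lt_of_le hℓpos hlx
  set e := ‖x - T₀ x‖⁻¹ • (x - T₀ x) with he
  have hxy : x - T₀ x = ‖x - T₀ x‖ • e := by
    rw [he, smul_inv_smul₀ (ne_of_gt hLpos)]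
  have he1 : ‖e‖ = 1 := by
    rw [he, norm_smul, Real.norm_eq_abs, abs_of_pos (inv_pos.2 hLpos),
      inv_mul_cancel₀ (ne_of_gt hLpos)]
  have hseg : ∀ s ∈ Icc (0:ℝ) ‖x - T₀ x‖, u₀ (x - s • e) = u₀ x - s :=
    seg_of_eq hu₀lip hLpos heqx hxy
  have hgrad : gradient u₀ x = e := gradient_eq_of_ray hu₀lip hdx he1 hLpos hseg
  refine ⟨hxΩ, hTxΩ, hlx, hdx, by rw [hgrad]; exact he1, by rw [hgrad]; exact hxy, ?_⟩
  intro q hq0 hqL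
  rw [hgrad]
  exact hseg q ⟨hq0, hqL⟩

theorem ttc_step {d : ℕ} {Ω : Set (Euc d)} (hΩc : IsCompact Ω) (hΩconv : Convex ℝ Ω)
    (hΩne : Ω.Nonempty) {ν : Measure (Euc d)} [IsProbabilityMeasure ν] (hνΩ : ν Ωᶜ = 0)
    {u₀ : Euc d → ℝ} (hu₀lip : LipschitzWith 1 u₀)
    {T : Euc d → Euc d} {μn : Measure (Euc d)} {cv : ℝ}
    (hgood : TTCGood Ω u₀ ν T μn cv)
    {ηv : ℝ} (hη0 : 0 < ηv) (hηc : ηv < cv)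
    {f g : Euc d → Euc d} (hfm : Measurable f) (hgm : Measurable g)
    (hfdef : ∀ x, DifferentiableAt ℝ u₀ x → f x = x - ηv • gradient u₀ x)
    (hgdef : ∀ x, DifferentiableAt ℝ u₀ x → g x = x + ηv • gradient u₀ x) :
    TTCGood Ω u₀ ν (T ∘ g) (Measure.map f μn) (cv - ηv) := by
  obtain ⟨hmap, hprob, hsupp, hcost, hpot, hray⟩ := hgood
  haveI := hprob
  have hΩm : MeasurableSet Ω := hΩc.isClosed.measurableSet
  have hTm : AEMeasurable T μn := aemeasurable_of_map_prob hmap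
  have hcv0 : 0 < cv := lt_trans hη0 hηc
  -- pointwise step
  have hstep : ∀ᵐ x ∂μn,
      f x = x - ηv • gradient u₀ x ∧ g (f x) = x ∧ (T ∘ g) (f x) = T x ∧
      u₀ (f x) = u₀ x - ηv ∧ ‖f x - (T ∘ g) (f x)‖ = ‖x - T x‖ - ηv ∧
      TTCRay Ω u₀ (T ∘ g) (cv - ηv) (f x) := by
    filter_upwards [hray] with x hx
    have hsegreal := TTCRay_real_seg hu₀lip hx
    obtain ⟨hxΩ, hTxΩ, hcvL, hdx, hgn, hxT, _⟩ := hx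
    set L := ‖x - T x‖ with hL
    set e := gradient u₀ x with he
    have hLpos : 0 < L := lt_of_lt_of_le hcv0 hcvL
    have hηL : ηv < L := lt_of_lt_of_le hηc hcvL
    have hfx : f x = x - ηv • e := hfdef x hdx
    obtain ⟨hgrad', hval', hseg'⟩ := ray_shift hu₀lip hgn hη0 hηL hsegreal
    have hdfx : DifferentiableAt ℝ u₀ (x - ηv • e) := hgrad'.differentiableAt
    have hgradfx : gradient u₀ (x - ηv • e) = e := hgrad'.gradient
    have hgfx : g (f x) = x := by
      rw [hfx, hgdef _ hdfx, hgradfx]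
      abel
    have hTgfx : (T ∘ g) (f x) = T x := by rw [Function.comp_apply, hgfx]
    have hsub : f x - (T ∘ g) (f x) = (L - ηv) • e := by
      rw [hTgfx, hfx, sub_smul, ← hxT]
      abel
    have hnorm : ‖f x - (T ∘ g) (f x)‖ = L - ηv := by
      rw [hsub, norm_smul, Real.norm_eq_abs, abs_of_pos (by linarith), hgn, mul_one]
    have hufx : u₀ (f x) = u₀ x - ηv := by rw [hfx]; exact hval'
    refine ⟨hfx, hgfx, hTgfx, hufx, hnorm, ?_⟩
    have hfxΩ : f x ∈ Ω := by
      have hTx : T x = x - L • e := by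
        rw [← hxT]; abel
      have hcomb : f x = (1 - ηv / L) • x + (ηv / L) • T x := by
        rw [hfx, hTx, smul_sub, smul_smul, div_mul_cancel₀ _ (ne_of_gt hLpos),
          sub_smul, one_smul]
        abel
      rw [hcomb]
      have hdiv1 : ηv / L ≤ 1 := (div_le_one hLpos).2 hηL.le
      have hdiv0 : 0 ≤ ηv / L := by positivity
      exact hΩconv hxΩ hTxΩ (by linarith) hdiv0 (by ring)
    refine ⟨hfxΩ, by rw [hTgfx]; exact hTxΩ, by rw [hnorm]; linarith, by rw [hfx]; exact hdfx,
      ?_, ?_, ?_⟩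
    · rw [hfx, hgradfx]; exact hgn
    · rw [hnorm, hsub, hfx, hgradfx]
    · intro q hq0 hqL
      rw [hnorm] at hqL
      rw [hfx, hgradfx]
      exact hseg' (q:ℝ) ⟨hq0, hqL⟩
  -- bookkeeping
  have hfam : AEMeasurable f μn := hfm.aemeasurable
  haveI hprob1 : IsProbabilityMeasure (Measure.map f μn) := Measure.isProbabilityMeasure_map hfam
  have hmapg : Measure.map g (Measure.map f μn) = μn := by
    rw [Measure.map_map hgm hfm]
    have hgfid : (g ∘ f) =ᵐ[μn] id := by
      filter_upwards [hstep] with x hx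
      exact hx.2.1
    rw [Measure.map_congr hgfid, Measure.map_id]
  have hTg_aem : AEMeasurable (T ∘ g) (Measure.map f μn) := by
    apply AEMeasurable.comp_aemeasurable ?_ hgm.aemeasurable
    rw [hmapg]; exact hTm
  have hmap1 : Measure.map (T ∘ g) (Measure.map f μn) = ν := by
    have h := AEMeasurable.map_map_of_aemeasurable (μ := Measure.map f μn) (g := T) (f := g)
        (by rw [hmapg]; exact hTm) hgm.aemeasurable
    rw [← h, hmapg, hmap]
  have hsupp1 : (Measure.map f μn) Ωᶜ = 0 := by
    rw [Measure.map_apply_of_aemeasurable hfam hΩm.compl]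
    have hfΩ : ∀ᵐ x ∂μn, f x ∈ Ω := by
      filter_upwards [hstep] with x hx
      exact hx.2.2.2.2.2.1
    rw [ae_iff] at hfΩ
    exact hfΩ
  -- integral computations
  have hint_u : Integrable u₀ μn := integrable_lip hΩc hsupp hu₀lip
  have hTΩ : ∀ᵐ x ∂μn, T x ∈ Ω := map_mem_ae hΩm hTm hmap hνΩ
  have hint_cost : Integrable (fun x => ‖x - T x‖) μn := cost_integrable hΩc hsupp hTm hTΩ
  have hu_int : (∫ y, u₀ y ∂(Measure.map f μn)) = (∫ x, u₀ x ∂μn) - ηv := by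
    rw [integral_map hfam hu₀lip.continuous.aestronglyMeasurable]
    have : (∫ x, u₀ (f x) ∂μn) = ∫ x, (u₀ x - ηv) ∂μn := by
      apply integral_congr_ae
      filter_upwards [hstep] with x hx
      exact hx.2.2.2.1
    rw [this, integral_sub hint_u (integrable_const _), integral_const]
    simp
  have hcost1 : (∫ y, ‖y - (T ∘ g) y‖ ∂(Measure.map f μn)) = W1 μn ν - ηv := by
    have hASM : AEStronglyMeasurable (fun y : Euc d => ‖y - (T ∘ g) y‖) (Measure.map f μn) :=
      ((aemeasurable_id.sub hTg_aem).norm).aestronglyMeasurable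
    rw [integral_map hfam hASM]
    have : (∫ x, ‖f x - (T ∘ g) (f x)‖ ∂μn) = ∫ x, (‖x - T x‖ - ηv) ∂μn := by
      apply integral_congr_ae
      filter_upwards [hstep] with x hx
      exact hx.2.2.2.2.1
    rw [this, integral_sub hint_cost (integrable_const _), integral_const, hcost]
    simp
  have hpot1 : (∫ y, u₀ y ∂(Measure.map f μn)) - ∫ y, u₀ y ∂ν = W1 μn ν - ηv := by
    rw [hu_int]
    linarith [hpot]
  have hlow : (∫ y, u₀ y ∂(Measure.map f μn)) - ∫ y, u₀ y ∂ν ≤ W1 (Measure.map f μn) ν :=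
    le_W1 hΩc hΩne hsupp1 hνΩ hu₀lip
  have hupp : W1 (Measure.map f μn) ν ≤ ∫ y, ‖y - (T ∘ g) y‖ ∂(Measure.map f μn) :=
    W1_le_cost hΩc hΩm hsupp1 hνΩ hmap1
  have hW1eq : W1 (Measure.map f μn) ν = W1 μn ν - ηv := by
    rw [hpot1] at hlow
    rw [hcost1] at hupp
    linarith
  refine ⟨hmap1, hprob1, hsupp1, by rw [hcost1, hW1eq], by rw [hpot1, hW1eq], ?_⟩
  -- a.e. transfer of the ray property
  apply ae_map_ray hΩm hu₀lip.continuous hfm hTg_aem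
  filter_upwards [hstep] with x hx
  exact hx.2.2.2.2.2

/-- the composed maps `T_n = T_{n-1} ∘ g_{n-1}` are optimal transport
maps for `(μ_n, ν)` with `ℓ₀(T_n) ≥ ℓ₀(T₀) - W₁(μ₀,ν)(1 - (1-θ)^n)`, up to `N(θ)`. -/
theorem ttc_composed_maps_optimal {d : ℕ} (Ω : Set (Euc d))
    (hΩc : IsCompact Ω) (hΩconv : Convex ℝ Ω)
    (μ ν : Measure (Euc d)) [IsProbabilityMeasure μ] [IsProbabilityMeasure ν]
    (hμΩ : μ Ωᶜ = 0) (hνΩ : ν Ωᶜ = 0) (hac : μ ≪ volume)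
    (θ : ℝ) (hθ : θ ∈ Set.Ioo (0:ℝ) 1)
    (u₀ : Euc d → ℝ) (hu₀ : IsKantorovichPotential u₀ μ ν)
    (T₀ : Euc d → Euc d) (hT₀ : IsOptimalMap T₀ μ ν)
    (hℓpos : 0 < ell0 T₀ μ) (hℓlt : ell0 T₀ μ < W1 μ ν)
    (η : ℕ → ℝ) (hη : ∀ k, η k = θ * (1 - θ) ^ k * W1 μ ν)
    (μseq : ℕ → Measure (Euc d)) (fseq gseq : ℕ → Euc d → Euc d)
    (hμ0 : μseq 0 = μ)
    (hfm : ∀ n, Measurable (fseq n))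
    (hf : ∀ n x, DifferentiableAt ℝ u₀ x → fseq n x = x - η n • gradient u₀ x)
    (hf' : ∀ n x, ¬ DifferentiableAt ℝ u₀ x → fseq n x = x)
    (hg : ∀ n x, DifferentiableAt ℝ u₀ x → gseq n x = x + η n • gradient u₀ x)
    (hg' : ∀ n x, ¬ DifferentiableAt ℝ u₀ x → gseq n x = x)
    (hiter : ∀ n, μseq (n + 1) = Measure.map (fseq n) (μseq n))
    (Tseq : ℕ → Euc d → Euc d)
    (hT0 : Tseq 0 = T₀)
    (hTsucc : ∀ n, Tseq (n + 1) = Tseq n ∘ gseq n)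
    (N : ℤ) (hN : N = ⌈Real.logb (1 - θ) (1 - ell0 T₀ μ / W1 μ ν)⌉ - 1) :
    ∀ n : ℕ, (n : ℤ) ≤ N → IsOptimalMap (Tseq n) (μseq n) ν ∧
      ell0 T₀ μ - W1 μ ν * (1 - (1 - θ) ^ n) ≤ ell0 (Tseq n) (μseq n) := by
  classical
  obtain ⟨hθ0, hθ1⟩ := hθ
  have hWpos : 0 < W1 μ ν := lt_trans hℓpos hℓlt
  have hb0 : 0 < 1 - θ := by linarith
  have hb1 : 1 - θ < 1 := by linarith
  have hΩm : MeasurableSet Ω := hΩc.isClosed.measurableSet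
  have hΩne : Ω.Nonempty := by
    by_contra hne
    rw [not_nonempty_iff_eq_empty] at hne
    rw [hne, compl_empty] at hμΩ
    have h1 : μ univ = 1 := measure_univ
    rw [hμΩ] at h1
    simp at h1
  obtain ⟨R, hR⟩ := hΩc.isBounded.subset_closedBall 0
  -- arithmetic facts
  have hNL : (N : ℝ) < Real.logb (1 - θ) (1 - ell0 T₀ μ / W1 μ ν) := by
    have hceil := Int.ceil_lt_add_one (R := ℝ) (Real.logb (1 - θ) (1 - ell0 T₀ μ / W1 μ ν))
    have : (N : ℝ) = (⌈Real.logb (1 - θ) (1 - ell0 T₀ μ / W1 μ ν)⌉ : ℝ) - 1 := by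
      rw [hN]; push_cast; ring
    rw [this]
    linarith
  have hratio : 0 < 1 - ell0 T₀ μ / W1 μ ν := by
    have : ell0 T₀ μ / W1 μ ν < 1 := (div_lt_one hWpos).2 hℓlt
    linarith
  have hkey : ∀ m : ℕ, (m : ℝ) < Real.logb (1 - θ) (1 - ell0 T₀ μ / W1 μ ν) →
      1 - ell0 T₀ μ / W1 μ ν < (1 - θ) ^ m := by
    intro m hm
    have h1 : (1 - θ) ^ (Real.logb (1 - θ) (1 - ell0 T₀ μ / W1 μ ν)) < (1 - θ) ^ (m : ℝ) :=
      Real.rpow_lt_rpow_of_exponent_gt hb0 hb1 hm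
    rw [Real.rpow_logb hb0 (by linarith) hratio, Real.rpow_natCast] at h1
    exact h1
  have hcpos : ∀ m : ℕ, (m : ℤ) ≤ N → 0 < ell0 T₀ μ - W1 μ ν * (1 - (1 - θ) ^ m) := by
    intro m hm
    have hmr : (m : ℝ) < Real.logb (1 - θ) (1 - ell0 T₀ μ / W1 μ ν) := by
      have h2 : (m : ℝ) ≤ (N : ℝ) := by exact_mod_cast hm
      linarith
    have h3 := hkey m hmr
    have h4 : W1 μ ν * (1 - (1 - θ) ^ m) < W1 μ ν * (ell0 T₀ μ / W1 μ ν) := by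
      apply mul_lt_mul_of_pos_left _ hWpos
      linarith
    rw [mul_div_cancel₀ _ (ne_of_gt hWpos)] at h4
    linarith
  have hηc : ∀ m : ℕ, ((m : ℤ) + 1 ≤ N) →
      η m < ell0 T₀ μ - W1 μ ν * (1 - (1 - θ) ^ m) := by
    intro m hm
    have hm1 : ((m + 1 : ℕ) : ℤ) ≤ N := by push_cast; omega
    have h3 := hcpos (m + 1) hm1
    rw [hη]
    have hpow : (1 - θ) ^ (m + 1) = (1 - θ) ^ m - θ * (1 - θ) ^ m := by ring
    nlinarith [h3]
  have hηpos : ∀ m : ℕ, 0 < η m := by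
    intro m
    rw [hη]
    have : (0:ℝ) < (1 - θ) ^ m := pow_pos hb0 m
    positivity
  -- measurability of gseq
  have hgradm : Measurable (gradient u₀) := measurable_gradient' u₀
  have hgm : ∀ n, Measurable (gseq n) := by
    intro n
    have heq : gseq n = fun x =>
        if DifferentiableAt ℝ u₀ x then x + η n • gradient u₀ x else x := by
      funext x
      by_cases hx : DifferentiableAt ℝ u₀ x
      · rw [hg n x hx, if_pos hx]
      · rw [hg' n x hx, if_neg hx]
    rw [heq]
    exact Measurable.ite (measurableSet_of_differentiableAt ℝ u₀)
      (measurable_id.add (hgradm.const_smul (η n))) measurable_id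
  -- the induction
  have main : ∀ n : ℕ, (n : ℤ) ≤ N →
      TTCGood Ω u₀ ν (Tseq n) (μseq n) (ell0 T₀ μ - W1 μ ν * (1 - (1 - θ) ^ n)) := by
    intro n
    induction n with
    | zero =>
      intro _
      have hc0 : ell0 T₀ μ - W1 μ ν * (1 - (1 - θ) ^ 0) = ell0 T₀ μ := by
        simp
      rw [hc0, hT0, hμ0]
      exact ttc_base hΩc hμΩ hνΩ hac hu₀ hT₀ hℓpos
    | succ n ih =>
      intro hn1
      have hn : (n : ℤ) ≤ N := by omega
      have hgood := ih hn
      have hη1 : (n : ℤ) + 1 ≤ N := by push_cast at hn1 ⊢; omega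
      have hstep := ttc_step hΩc hΩconv hΩne hνΩ hu₀.1 hgood (hηpos n) (hηc n hη1)
        (hfm n) (hgm n) (hf n) (hg n)
      have hceq : ell0 T₀ μ - W1 μ ν * (1 - (1 - θ) ^ n) - η n =
          ell0 T₀ μ - W1 μ ν * (1 - (1 - θ) ^ (n + 1)) := by
        rw [hη]; ring
      rw [hceq] at hstep
      rw [hTsucc n, hiter n]
      exact hstep
  -- conclusion
  intro n hn
  obtain ⟨hmap, hprob, hsupp, hcost, hpot, hray⟩ := main n hn
  haveI := hprob
  refine ⟨⟨hmap, hcost⟩, ?_⟩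
  apply le_ell0 (B := 2 * R)
  · filter_upwards [hray] with x hx
    exact hx.2.2.1
  · filter_upwards [hray] with x hx
    obtain ⟨hxΩ, hTxΩ, -⟩ := hx
    have hxa : ‖x‖ ≤ R := by simpa [dist_zero_right] using hR hxΩ
    have hxb : ‖Tseq n x‖ ≤ R := by simpa [dist_zero_right] using hR hTxΩ
    calc ‖x - Tseq n x‖ ≤ ‖x‖ + ‖Tseq n x‖ := norm_sub_le _ _
      _ ≤ 2 * R := by linarith

end
end
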